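/- arXiv:1902.04873 — 7 statements merged into one kernel-verified Lean document; each statement's English description precedes it below -/
import Mathlib

section
/- Let G be a finite group and ψ an irreducible complex character of G. Then (1/|G|^{2g}) · Σ_{g₁,h₁,...,g_g,h_g ∈ G} ψ([g₁,h₁]⋯[g_g,h_g]) = 1/ψ(1)^{2g-1}, i.e., the expected value of ψ under the measure induced by the genus-g orientable surface word [x₁,y₁]⋯[x_g,y_g] equals ψ(1)^{1-2g}. -/
open CategoryTheory Module FDRep

/-- `χ : G → ℂ` is an irreducible (complex) character of `G`. -/
def IsIrredChar (G : Type) [Group G] (χ : G → ℂ) : Prop :=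
  ∃ V : FDRep ℂ G, CategoryTheory.Simple V ∧ ∀ x : G, V.character x = χ x

section Aux
variable {G : Type} [Group G] [Fintype G]

lemma my_schur_scalar (V : FDRep ℂ G) [Simple V] (f : V →ₗ[ℂ] V)
    (hf : ∀ g : G, f ∘ₗ V.ρ g = V.ρ g ∘ₗ f) :
    ∃ c : ℂ, f = c • LinearMap.id := by
  let φ : V ⟶ V := ⟨FGModuleCat.ofHom f, fun g => by
    ext v; have := LinearMap.congr_fun (hf g) v; simp [FDRep.ρ] at this; exact this⟩
  obtain ⟨c, hc⟩ := endomorphism_simple_eq_smul_id ℂ φ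
  refine ⟨c, ?_⟩
  have := congrArg (fun h => h.hom.hom.hom) hc
  simp only [φ] at this
  ext v
  exact (LinearMap.congr_fun this v).symm

lemma my_orth (V : FDRep ℂ G) [Simple V] :
    ∑ b : G, V.character b * V.character b⁻¹ = (Fintype.card G : ℂ) := by
  have h := FDRep.char_orthonormal (k := ℂ) V V
  rw [if_pos ⟨Iso.refl V⟩] at h
  have h' : ((Fintype.card G : ℂ))⁻¹ * ∑ b : G, V.character b * V.character b⁻¹ = 1 := by
    simpa [Nat.card_eq_fintype_card] using h
  rw [inv_mul_eq_one₀
    (show ((Fintype.card G : ℂ)) ≠ 0 by exact_mod_cast Fintype.card_ne_zero)] at h'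
  exact h'.symm

lemma char_trace (V : FDRep ℂ G) (g : G) :
    LinearMap.trace ℂ V (V.ρ g) = V.character g := rfl

lemma my_conv (V : FDRep ℂ G) [Simple V] :
    V.character 1 ≠ 0 ∧ ∀ x : G, ∑ b : G, V.character b * V.character (b⁻¹ * x) =
      (Fintype.card G : ℂ) * V.character x / V.character 1 := by
  set ψ := V.character with hψ
  set P : V →ₗ[ℂ] V := ∑ b : G, ψ b • V.ρ b⁻¹ with hP
  have hcomm : ∀ g : G, P ∘ₗ V.ρ g = V.ρ g ∘ₗ P := by
    intro g
    rw [← Module.End.mul_eq_comp, ← Module.End.mul_eq_comp, hP, Finset.sum_mul, Finset.mul_sum]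
    refine Fintype.sum_equiv (MulAut.conj g⁻¹).toEquiv _ _ fun b => ?_
    simp only [MulAut.conj_apply, MulEquiv.toEquiv_eq_coe, EquivLike.coe_coe]
    rw [smul_mul_assoc, mul_smul_comm, ← map_mul, ← map_mul]
    rw [show ψ (g⁻¹ * b * (g⁻¹)⁻¹) = ψ b from V.char_conj b g⁻¹]
    congr 2
    group
  obtain ⟨c, hc⟩ := my_schur_scalar V P hcomm
  have htr : LinearMap.trace ℂ V P = (Fintype.card G : ℂ) := by
    rw [hP, map_sum]
    simp only [map_smul, char_trace, smul_eq_mul]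
    exact my_orth V
  have htr2 : LinearMap.trace ℂ V P = c * ψ 1 := by
    rw [hc, map_smul, smul_eq_mul, LinearMap.trace_id]
    rw [show ψ 1 = (finrank ℂ V : ℂ) from V.char_one]
  have hkey : c * ψ 1 = (Fintype.card G : ℂ) := htr2.symm.trans htr
  have hne : ψ 1 ≠ 0 := by
    intro h0
    rw [h0, mul_zero] at hkey
    exact (show ((Fintype.card G : ℂ)) ≠ 0 by exact_mod_cast Fintype.card_ne_zero) hkey.symm
  have hcval : c = (Fintype.card G : ℂ) / ψ 1 := by
    field_simp at hkey ⊢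
    linear_combination hkey
  refine ⟨hne, fun x => ?_⟩
  have h1 : LinearMap.trace ℂ V (P * V.ρ x) = ∑ b : G, ψ b * ψ (b⁻¹ * x) := by
    rw [hP, Finset.sum_mul, map_sum]
    refine Finset.sum_congr rfl fun b _ => ?_
    rw [smul_mul_assoc, map_smul, ← map_mul, char_trace, smul_eq_mul]
  have h2 : LinearMap.trace ℂ V (P * V.ρ x) = c * ψ x := by
    rw [hc, smul_mul_assoc, Module.End.mul_eq_comp, LinearMap.id_comp, map_smul,
      char_trace, smul_eq_mul]
  rw [← h1, h2, hcval, div_mul_eq_mul_div]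

lemma my_conj_sum (V : FDRep ℂ G) [Simple V] (x y : G) :
    ∑ a : G, V.character (a * x * a⁻¹ * y) =
      (Fintype.card G : ℂ) * V.character x * V.character y / V.character 1 := by
  set ψ := V.character with hψ
  set T : V →ₗ[ℂ] V := ∑ a : G, V.ρ (a * x * a⁻¹) with hT
  have hcomm : ∀ g : G, T ∘ₗ V.ρ g = V.ρ g ∘ₗ T := by
    intro g
    rw [← Module.End.mul_eq_comp, ← Module.End.mul_eq_comp, hT, Finset.sum_mul, Finset.mul_sum]
    refine Fintype.sum_equiv (Equiv.mulLeft g⁻¹) _ _ fun a => ?_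
    rw [← map_mul, ← map_mul, Equiv.coe_mulLeft]
    congr 1
    group
  obtain ⟨c, hc⟩ := my_schur_scalar V T hcomm
  have htr : LinearMap.trace ℂ V T = (Fintype.card G : ℂ) * ψ x := by
    rw [hT, map_sum]
    simp only [char_trace]
    rw [Finset.sum_congr rfl fun a _ => V.char_conj x a, Finset.sum_const,
      Finset.card_univ, nsmul_eq_mul]
  have htr2 : LinearMap.trace ℂ V T = c * ψ 1 := by
    rw [hc, map_smul, smul_eq_mul, LinearMap.trace_id]
    rw [show ψ 1 = (finrank ℂ V : ℂ) from V.char_one]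
  have hkey : c * ψ 1 = (Fintype.card G : ℂ) * ψ x := htr2.symm.trans htr
  have hne : ψ 1 ≠ 0 := (my_conv V).1
  have hcval : c = (Fintype.card G : ℂ) * ψ x / ψ 1 := by
    field_simp at hkey ⊢
    linear_combination hkey
  have h1 : LinearMap.trace ℂ V (T * V.ρ y) = ∑ a : G, ψ (a * x * a⁻¹ * y) := by
    rw [hT, Finset.sum_mul, map_sum]
    exact Finset.sum_congr rfl fun a _ => by rw [← map_mul, char_trace]
  have h2 : LinearMap.trace ℂ V (T * V.ρ y) = c * ψ y := by
    rw [hc, smul_mul_assoc, Module.End.mul_eq_comp, LinearMap.id_comp, map_smul,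
      char_trace, smul_eq_mul]
  rw [← h1, h2, hcval, div_mul_eq_mul_div]

lemma my_comm_sum (V : FDRep ℂ G) [Simple V] (x : G) :
    ∑ a : G, ∑ b : G, V.character (a * b * a⁻¹ * b⁻¹ * x) =
      (Fintype.card G : ℂ) ^ 2 * V.character x / V.character 1 ^ 2 := by
  set ψ := V.character with hψ
  have hne : ψ 1 ≠ 0 := (my_conv V).1
  rw [Finset.sum_comm]
  have step1 : ∀ b : G, ∑ a : G, ψ (a * b * a⁻¹ * b⁻¹ * x) =
      (Fintype.card G : ℂ) * ψ b * ψ (b⁻¹ * x) / ψ 1 := by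
    intro b
    have := my_conj_sum V b (b⁻¹ * x)
    rw [← this]
    exact Finset.sum_congr rfl fun a _ => by rw [mul_assoc]
  rw [Finset.sum_congr rfl fun b _ => step1 b]
  have : ∑ b : G, (Fintype.card G : ℂ) * ψ b * ψ (b⁻¹ * x) / ψ 1 =
      ((Fintype.card G : ℂ) / ψ 1) * ∑ b : G, ψ b * ψ (b⁻¹ * x) := by
    rw [Finset.mul_sum]
    exact Finset.sum_congr rfl fun b _ => by ring
  rw [this, (my_conv V).2 x]
  ring

lemma my_genus (V : FDRep ℂ G) [Simple V] (n : ℕ) (x : G) :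
    ∑ a : Fin n → G, ∑ b : Fin n → G,
        V.character ((List.ofFn fun i => a i * b i * (a i)⁻¹ * (b i)⁻¹).prod * x) =
      (Fintype.card G : ℂ) ^ (2 * n) * V.character x / V.character 1 ^ (2 * n) := by
  set ψ := V.character with hψ
  have hne : ψ 1 ≠ 0 := (my_conv V).1
  induction n generalizing x with
  | zero => simp
  | succ n ih =>
    have hsplit : ∀ F : (Fin (n + 1) → G) → ℂ,
        ∑ a : Fin (n + 1) → G, F a = ∑ a0 : G, ∑ as : Fin n → G, F (Fin.cons a0 as) := by
      intro F
      rw [← Equiv.sum_comp (Fin.consEquiv fun _ => G) F, Fintype.sum_prod_type]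
      rfl
    have expand : ∀ (a0 : G) (as : Fin n → G) (b0 : G) (bs : Fin n → G),
        ψ ((List.ofFn fun i => (Fin.cons a0 as : Fin (n+1) → G) i *
            (Fin.cons b0 bs : Fin (n+1) → G) i * ((Fin.cons a0 as : Fin (n+1) → G) i)⁻¹ *
            ((Fin.cons b0 bs : Fin (n+1) → G) i)⁻¹).prod * x) =
          ψ (a0 * b0 * a0⁻¹ * b0⁻¹ *
            ((List.ofFn fun i => as i * bs i * (as i)⁻¹ * (bs i)⁻¹).prod * x)) := by
      intro a0 as b0 bs
      congr 1
      rw [List.ofFn_succ]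
      simp only [Fin.cons_zero, Fin.cons_succ, List.prod_cons]
      rw [mul_assoc]
    calc ∑ a : Fin (n+1) → G, ∑ b : Fin (n+1) → G,
            ψ ((List.ofFn fun i => a i * b i * (a i)⁻¹ * (b i)⁻¹).prod * x)
        = ∑ a0 : G, ∑ as : Fin n → G, ∑ b : Fin (n+1) → G,
            ψ ((List.ofFn fun i => (Fin.cons a0 as : Fin (n+1) → G) i * b i *
              ((Fin.cons a0 as : Fin (n+1) → G) i)⁻¹ * (b i)⁻¹).prod * x) := by
          exact hsplit fun a => ∑ b : Fin (n+1) → G,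
            ψ ((List.ofFn fun i => a i * b i * (a i)⁻¹ * (b i)⁻¹).prod * x)
      _ = ∑ a0 : G, ∑ as : Fin n → G, ∑ b0 : G, ∑ bs : Fin n → G,
            ψ (a0 * b0 * a0⁻¹ * b0⁻¹ *
              ((List.ofFn fun i => as i * bs i * (as i)⁻¹ * (bs i)⁻¹).prod * x)) := by
          refine Finset.sum_congr rfl fun a0 _ => Finset.sum_congr rfl fun as _ => ?_
          rw [hsplit fun b => ψ ((List.ofFn fun i => (Fin.cons a0 as : Fin (n+1) → G) i * b i *
              ((Fin.cons a0 as : Fin (n+1) → G) i)⁻¹ * (b i)⁻¹).prod * x)]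
          exact Finset.sum_congr rfl fun b0 _ => Finset.sum_congr rfl fun bs _ =>
            expand a0 as b0 bs
      _ = ∑ as : Fin n → G, ∑ a0 : G, ∑ b0 : G, ∑ bs : Fin n → G,
            ψ (a0 * b0 * a0⁻¹ * b0⁻¹ *
              ((List.ofFn fun i => as i * bs i * (as i)⁻¹ * (bs i)⁻¹).prod * x)) :=
          Finset.sum_comm
      _ = ∑ as : Fin n → G, ∑ a0 : G, ∑ bs : Fin n → G, ∑ b0 : G,
            ψ (a0 * b0 * a0⁻¹ * b0⁻¹ *
              ((List.ofFn fun i => as i * bs i * (as i)⁻¹ * (bs i)⁻¹).prod * x)) :=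
          Finset.sum_congr rfl fun as _ => Finset.sum_congr rfl fun a0 _ => Finset.sum_comm
      _ = ∑ as : Fin n → G, ∑ bs : Fin n → G, ∑ a0 : G, ∑ b0 : G,
            ψ (a0 * b0 * a0⁻¹ * b0⁻¹ *
              ((List.ofFn fun i => as i * bs i * (as i)⁻¹ * (bs i)⁻¹).prod * x)) :=
          Finset.sum_congr rfl fun as _ => Finset.sum_comm
      _ = ∑ as : Fin n → G, ∑ bs : Fin n → G, (Fintype.card G : ℂ) ^ 2 *
            ψ ((List.ofFn fun i => as i * bs i * (as i)⁻¹ * (bs i)⁻¹).prod * x) / ψ 1 ^ 2 :=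
          Finset.sum_congr rfl fun as _ => Finset.sum_congr rfl fun bs _ =>
            my_comm_sum V _
      _ = ((Fintype.card G : ℂ) ^ 2 / ψ 1 ^ 2) * ∑ as : Fin n → G, ∑ bs : Fin n → G,
            ψ ((List.ofFn fun i => as i * bs i * (as i)⁻¹ * (bs i)⁻¹).prod * x) := by
          rw [Finset.mul_sum]
          refine Finset.sum_congr rfl fun as _ => ?_
          rw [Finset.mul_sum]
          exact Finset.sum_congr rfl fun bs _ => by ring
      _ = ((Fintype.card G : ℂ) ^ 2 / ψ 1 ^ 2) *
            ((Fintype.card G : ℂ) ^ (2 * n) * ψ x / ψ 1 ^ (2 * n)) := by rw [ih]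
      _ = (Fintype.card G : ℂ) ^ (2 * (n + 1)) * ψ x / ψ 1 ^ (2 * (n + 1)) := by
          rw [show 2 * (n + 1) = 2 + 2 * n by ring, pow_add, pow_add]
          ring

end Aux

/-- The expected value of an irreducible character `ψ` under the measure induced by the
genus-`g` orientable surface word `[x₁,y₁]⋯[x_g,y_g]` equals `ψ(1)^{1-2g}`. -/
theorem stmt3 (G : Type) [Group G] [Fintype G] (ψ : G → ℂ) (hψ : IsIrredChar G ψ)
    (g : ℕ) (hg : 1 ≤ g) :
    (1 / (Nat.card G : ℂ) ^ (2 * g)) * ∑ a : Fin g → G, ∑ b : Fin g → G,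
        ψ ((List.ofFn fun i => a i * b i * (a i)⁻¹ * (b i)⁻¹).prod) =
      1 / (ψ 1) ^ (2 * g - 1) := by
  obtain ⟨V, hs, hchar⟩ := hψ
  haveI := hs
  have hψeq : ψ = V.character := funext fun x => (hchar x).symm
  subst hψeq
  have hne : V.character 1 ≠ 0 := (my_conv V).1
  have hcard : ((Nat.card G : ℂ)) = (Fintype.card G : ℂ) := by
    rw [Nat.card_eq_fintype_card]
  have h := my_genus V g 1
  simp only [mul_one] at h
  rw [hcard, h]
  have hcne : ((Fintype.card G : ℂ)) ≠ 0 := by exact_mod_cast Fintype.card_ne_zero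
  have h2g : 2 * g = (2 * g - 1) + 1 := by omega
  have hfr : ((finrank ℂ V : ℂ)) ≠ 0 := by rw [← V.char_one]; exact hne
  rw [h2g, pow_succ]
  field_simp
  rw [pow_succ']
  rw [Nat.add_sub_cancel]
end

section
/- Let G be a finite group and ψ an irreducible complex character of G, and let ε(ψ) = (1/|G|) Σ_{g ∈ G} ψ(g²) be the Frobenius–Schur indicator of ψ. Then for every g ≥ 1, (1/|G|^g) Σ_{g₁,...,g_g ∈ G} ψ(g₁²⋯g_g²) = ε(ψ)^g / ψ(1)^{g-1}. -/
open CategoryTheory Module LinearMap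

variable {G : Type} [Group G] [Fintype G]

noncomputable def Tmap (V : FDRep ℂ G) : V →ₗ[ℂ] V := ∑ x : G, V.ρ (x ^ 2)

lemma Tcomm (V : FDRep ℂ G) (g : G) :
    (Tmap V) * (V.ρ g) = (V.ρ g) * (Tmap V) := by
  unfold Tmap
  rw [Finset.sum_mul, Finset.mul_sum]
  refine Fintype.sum_equiv ((Equiv.mulRight g).trans (Equiv.mulLeft g⁻¹)) _ _ fun x => ?_
  simp only [Equiv.trans_apply, Equiv.coe_mulRight, Equiv.coe_mulLeft]
  rw [← map_mul, ← map_mul]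
  congr 1
  simp [sq, mul_assoc]

noncomputable def Thom (V : FDRep ℂ G) : V ⟶ V :=
  ⟨FGModuleCat.ofHom (Tmap V), fun g => by ext v; exact LinearMap.congr_fun (Tcomm V g) v⟩

lemma key (V : FDRep ℂ G) [Simple V] :
    ∃ c : ℂ, ∀ h : G, ∑ x : G, V.character (x ^ 2 * h) = c * V.character h := by
  obtain ⟨c, hc⟩ := CategoryTheory.endomorphism_simple_eq_smul_id (𝕜 := ℂ) (Thom V)
  refine ⟨c, fun h => ?_⟩
  have hT : Tmap V = c • LinearMap.id := by
    ext v
    have := congrArg (fun f => f.hom.hom.hom v) hc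
    exact this.symm
  have : ∑ x : G, V.character (x ^ 2 * h)
      = LinearMap.trace ℂ V ((Tmap V) * V.ρ h) := by
    unfold Tmap
    rw [Finset.sum_mul, map_sum]
    simp [FDRep.character, map_mul]
  rw [this, hT, smul_mul_assoc, map_smul, smul_eq_mul]
  congr 1

lemma char_one_ne (V : FDRep ℂ G) [Simple V] : V.character 1 ≠ 0 := by
  rw [FDRep.char_one]
  simp only [ne_eq, Nat.cast_eq_zero]
  intro h0
  have hsub : Subsingleton V := Module.finrank_zero_iff.mp h0
  refine CategoryTheory.id_nonzero V ?_
  ext v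
  exact @Subsingleton.elim _ hsub _ _

lemma iter (V : FDRep ℂ G) (c : ℂ)
    (hc : ∀ h : G, ∑ x : G, V.character (x ^ 2 * h) = c * V.character h) (n : ℕ) :
    ∀ h : G, ∑ t : Fin n → G, V.character ((List.ofFn fun i => (t i) ^ 2).prod * h)
      = c ^ n * V.character h := by
  induction n with
  | zero => intro h; simp
  | succ n ih =>
    intro h
    have e1 : ∑ t : Fin (n+1) → G, V.character ((List.ofFn fun i => (t i) ^ 2).prod * h)
        = ∑ p : G × (Fin n → G),
            V.character (p.1 ^ 2 * ((List.ofFn fun i => (p.2 i) ^ 2).prod * h)) := by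
      refine Fintype.sum_equiv (Fin.consEquiv fun _ => G).symm _ _ fun t => ?_
      simp [List.ofFn_succ, mul_assoc, Fin.tail]
    rw [e1, Fintype.sum_prod_type, Finset.sum_comm]
    have e2 : ∀ t : Fin n → G,
        ∑ x : G, V.character (x ^ 2 * ((List.ofFn fun i => (t i) ^ 2).prod * h))
          = c * V.character ((List.ofFn fun i => (t i) ^ 2).prod * h) := fun t => hc _
    rw [Finset.sum_congr rfl (fun t _ => e2 t), ← Finset.mul_sum, ih h]
    ring


/-- Frobenius–Schur: if `ε` is the Frobenius–Schur indicator of the irreducible character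
`ψ`, then the expected value of `ψ` under the measure induced by the word `x₁²⋯x_g²`
equals `ε^g / ψ(1)^{g-1}`. -/
theorem stmt4 (G : Type) [Group G] [Fintype G] (ψ : G → ℂ) (hψ : IsIrredChar G ψ)
    (ε : ℂ) (hε : ε = (1 / (Nat.card G : ℂ)) * ∑ x : G, ψ (x ^ 2))
    (g : ℕ) (hg : 1 ≤ g) :
    (1 / (Nat.card G : ℂ) ^ g) * ∑ t : Fin g → G,
        ψ ((List.ofFn fun i => (t i) ^ 2).prod) =
      ε ^ g / (ψ 1) ^ (g - 1) := by
  obtain ⟨V, hS, hch⟩ := hψ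
  haveI := hS
  obtain ⟨c, hc⟩ := key V
  have hψ1 : ψ 1 ≠ 0 := by rw [← hch]; exact char_one_ne V
  have hN : (Nat.card G : ℂ) ≠ 0 := by
    simp [Nat.card_eq_fintype_card, Fintype.card_ne_zero]
  have hsum2 : ∑ x : G, ψ (x ^ 2) = c * ψ 1 := by
    rw [← hch]
    have := hc 1
    simp only [mul_one] at this
    rw [← this]
    exact Finset.sum_congr rfl fun x _ => (hch _).symm ▸ rfl
  have hmain : ∑ t : Fin g → G, ψ ((List.ofFn fun i => (t i) ^ 2).prod)
      = c ^ g * ψ 1 := by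
    rw [← hch]
    have := iter V c hc g 1
    simp only [mul_one] at this
    rw [← this]
    exact Finset.sum_congr rfl fun t _ => (hch _).symm
  obtain ⟨k, rfl⟩ : ∃ k, g = k + 1 := ⟨g - 1, (Nat.succ_pred_eq_of_pos hg).symm⟩
  rw [hmain, hε, hsum2]
  simp only [Nat.add_sub_cancel]
  field_simp
  rw [div_pow, mul_div_assoc', mul_div_cancel_left₀ _ (pow_ne_zero _ hN)]
  ring
end

section
/- An element w of a free group F is a product of squares (i.e., w = u₁²⋯u_g² for some g ≥ 0 and u_i ∈ F) if and only if w lies in K₂(F), the kernel of the map F → (Z/2Z)^{rank F} sending each free generator to a distinct standard generator. -/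
def KmF (r m : ℕ) : Subgroup (FreeGroup (Fin r)) :=
  MonoidHom.ker
    (FreeGroup.lift fun i => fun j : Fin r =>
      Multiplicative.ofAdd (if i = j then (1 : ZMod m) else 0) :
      FreeGroup (Fin r) →* (Fin r → Multiplicative (ZMod m)))

private def Nsq (r : ℕ) : Subgroup (FreeGroup (Fin r)) :=
  Subgroup.closure (Set.range fun u : FreeGroup (Fin r) => u ^ 2)

private lemma Nsq_normal (r : ℕ) : (Nsq r).Normal := by
  constructor
  intro n hn g
  induction hn using Subgroup.closure_induction with
  | mem x hx =>
    obtain ⟨u, rfl⟩ := hx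
    refine Subgroup.subset_closure ⟨g * u * g⁻¹, ?_⟩
    show (g * u * g⁻¹) ^ 2 = g * u ^ 2 * g⁻¹
    rw [pow_two, pow_two]; group
  | one => simpa using (Nsq r).one_mem
  | mul x y hx hy ihx ihy =>
    have : g * (x * y) * g⁻¹ = (g * x * g⁻¹) * (g * y * g⁻¹) := by group
    rw [this]; exact (Nsq r).mul_mem ihx ihy
  | inv x hx ih =>
    have : g * x⁻¹ * g⁻¹ = (g * x * g⁻¹)⁻¹ := by group
    rw [this]; exact (Nsq r).inv_mem ih

private lemma sq_mem (r : ℕ) (u : FreeGroup (Fin r)) : u ^ 2 ∈ Nsq r :=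
  Subgroup.subset_closure ⟨u, rfl⟩

private lemma ker_le_Nsq (r : ℕ) : KmF r 2 ≤ Nsq r := by
  intro w hw
  haveI := Nsq_normal r
  rw [← QuotientGroup.eq_one_iff]
  set Q := FreeGroup (Fin r) ⧸ Nsq r with hQ
  have hsq : ∀ q : Q, q * q = 1 := by
    intro q
    induction q using QuotientGroup.induction_on with
    | _ g =>
      rw [← QuotientGroup.mk_mul, QuotientGroup.eq_one_iff, ← pow_two]
      exact sq_mem r g
  have hinv : ∀ q : Q, q⁻¹ = q := fun q => inv_eq_of_mul_eq_one_right (hsq q)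
  have hcomm : ∀ a b : Q, a * b = b * a := by
    intro a b
    calc a * b = (a * b)⁻¹ := (hinv _).symm
    _ = b⁻¹ * a⁻¹ := mul_inv_rev a b
    _ = b * a := by rw [hinv, hinv]
  letI : CommGroup Q := { (inferInstance : Group Q) with mul_comm := hcomm }
  set t : Fin r → Q := fun i => ((FreeGroup.of i : FreeGroup (Fin r)) : Q) with ht
  set e : Fin r → (FreeGroup (Fin r) →* Multiplicative ℤ) := fun j =>
    FreeGroup.lift (fun i => Multiplicative.ofAdd (if i = j then (1:ℤ) else 0)) with he
  have key : ∀ v : FreeGroup (Fin r),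
      (v : Q) = ∏ j : Fin r, t j ^ (Multiplicative.toAdd (e j v)) := by
    intro v
    induction v using FreeGroup.induction_on with
    | C1 => simp
    | of x =>
      have : ∀ j, Multiplicative.toAdd (e j (FreeGroup.of x)) = if x = j then (1:ℤ) else 0 := by
        intro j; simp [he, FreeGroup.lift_apply_of]
      simp only [this]
      have : ∀ j : Fin r, t j ^ (if x = j then (1:ℤ) else 0) = if x = j then t j else 1 := by
        intro j; split <;> simp
      rw [Finset.prod_congr rfl (fun j _ => this j), Finset.prod_ite_eq]
      simp [ht]
    | inv_of x ih =>
      rw [QuotientGroup.mk_inv, ih]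
      rw [← Finset.prod_inv_distrib]
      refine Finset.prod_congr rfl (fun j _ => ?_)
      rw [map_inv, ← zpow_neg]
      rfl
    | mul x y ihx ihy =>
      rw [QuotientGroup.mk_mul, ihx, ihy, ← Finset.prod_mul_distrib]
      refine Finset.prod_congr rfl (fun j _ => ?_)
      rw [← zpow_add, map_mul]
      rfl
  rw [key w]
  have heven : ∀ j : Fin r, (2:ℤ) ∣ Multiplicative.toAdd (e j w) := by
    intro j
    have hhom : (AddMonoidHom.toMultiplicative (Int.castAddHom (ZMod 2))).comp (e j)
        = (Pi.evalMonoidHom (fun _ => Multiplicative (ZMod 2)) j).comp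
            (FreeGroup.lift fun i => fun j : Fin r =>
              Multiplicative.ofAdd (if i = j then (1 : ZMod 2) else 0)) := by
      ext x
      simp [he, FreeGroup.lift_apply_of]
    have hw1 : (FreeGroup.lift fun i => fun j : Fin r =>
        Multiplicative.ofAdd (if i = j then (1 : ZMod 2) else 0)) w = 1 := hw
    have := DFunLike.congr_fun hhom w
    simp only [MonoidHom.coe_comp, Function.comp_apply] at this
    rw [hw1] at this
    simp only [Pi.evalMonoidHom_apply, Pi.one_apply] at this
    have h0 : ((Multiplicative.toAdd (e j w) : ℤ) : ZMod 2) = 0 := by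
      have := congrArg Multiplicative.toAdd this
      simpa using this
    exact (ZMod.intCast_zmod_eq_zero_iff_dvd _ 2).mp h0
  refine Finset.prod_eq_one (fun j _ => ?_)
  obtain ⟨k, hk⟩ := heven j
  rw [hk, zpow_mul]
  have : t j ^ (2:ℤ) = 1 := by
    rw [zpow_two]; exact hsq (t j)
  rw [this, one_zpow]

/-- `w ∈ F_r` is a product of squares if and only if `w ∈ K₂(F_r)`. -/
theorem stmt7 (r : ℕ) (w : FreeGroup (Fin r)) :
    (∃ (g : ℕ) (u : Fin g → FreeGroup (Fin r)),
      w = (List.ofFn fun i => (u i) ^ 2).prod) ↔ w ∈ KmF r 2 := by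
  constructor
  · rintro ⟨g, u, rfl⟩
    have pow2 : ∀ a : Fin r → Multiplicative (ZMod 2), a ^ 2 = 1 := by
      intro a; funext j
      have h2 : ∀ b : Multiplicative (ZMod 2), b * b = 1 := by decide
      show (a j) ^ 2 = 1
      rw [pow_two]; exact h2 _
    show (FreeGroup.lift _) _ = 1
    rw [map_list_prod, List.map_ofFn]
    refine List.prod_eq_one fun x hx => ?_
    obtain ⟨i, rfl⟩ := List.mem_ofFn.mp hx
    simp only [Function.comp_apply, map_pow]
    exact pow2 _
  · intro hw
    have hN := ker_le_Nsq r hw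
    have hmem : w ∈ Submonoid.closure ((Set.range fun u : FreeGroup (Fin r) => u ^ 2)
        ∪ (Set.range fun u : FreeGroup (Fin r) => u ^ 2)⁻¹) := by
      rw [← Subgroup.closure_toSubmonoid]
      exact hN
    obtain ⟨l, hl, hprod⟩ := Submonoid.exists_list_of_mem_closure hmem
    have hsqs : ∀ y ∈ l, ∃ v, y = v ^ 2 := by
      intro y hy
      rcases hl y hy with ⟨v, rfl⟩ | hy'
      · exact ⟨v, rfl⟩
      · obtain ⟨v, hv⟩ := Set.mem_inv.mp hy'
        refine ⟨v⁻¹, ?_⟩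
        have hv' : v ^ 2 = y⁻¹ := hv
        rw [inv_pow, hv', inv_inv]
    choose f hf using fun i : Fin l.length => hsqs (l.get i) (l.get_mem i)
    refine ⟨l.length, f, ?_⟩
    have hofn : (List.ofFn fun i => f i ^ 2) = l := by
      conv_rhs => rw [← List.ofFn_get l]
      congr 1
      funext i
      exact (hf i).symm
    rw [hofn, hprod]
end

section
/- For the orientable surface word w = [x₁,y₁]⋯[x_g,y_g] ∈ F_{2g}, and every m ∈ Z_{≥2} ∪ {∞}, it holds that χ_m(w) = 1 - 2g, i.e., the minimal rank of a subgroup H ≤ F_{2g} with w ∈ K_m(H) is exactly 2g. -/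
open scoped commutatorElement

section Heis
variable {R : Type*} [CommRing R] {V : Type*} [AddCommGroup V] [Module R V]

@[ext] structure Heis (φ c : V →ₗ[R] R) where
  v : V
  t : R

variable {φ c : V →ₗ[R] R}

instance : Mul (Heis φ c) := ⟨fun a b => ⟨a.v + b.v, a.t + b.t + φ a.v * c b.v⟩⟩
instance : One (Heis φ c) := ⟨⟨0, 0⟩⟩
instance : Inv (Heis φ c) := ⟨fun a => ⟨-a.v, -a.t + φ a.v * c a.v⟩⟩

@[simp] lemma Heis.mul_v (a b : Heis φ c) : (a * b).v = a.v + b.v := rfl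
@[simp] lemma Heis.mul_t (a b : Heis φ c) : (a * b).t = a.t + b.t + φ a.v * c b.v := rfl
@[simp] lemma Heis.one_v : (1 : Heis φ c).v = 0 := rfl
@[simp] lemma Heis.one_t : (1 : Heis φ c).t = 0 := rfl
@[simp] lemma Heis.inv_v (a : Heis φ c) : (a⁻¹).v = -a.v := rfl
@[simp] lemma Heis.inv_t (a : Heis φ c) : (a⁻¹).t = -a.t + φ a.v * c a.v := rfl

instance : Group (Heis φ c) where
  mul_assoc a b d := by
    ext <;> simp only [Heis.mul_v, Heis.mul_t, map_add]
    case v => abel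
    case t => ring
  one_mul a := by ext <;> simp
  mul_one a := by ext <;> simp
  inv_mul_cancel a := by
    ext <;> simp only [Heis.mul_v, Heis.mul_t, Heis.inv_v, Heis.inv_t, Heis.one_v, Heis.one_t,
      map_neg]
    case v => abel
    case t => ring

lemma Heis.commutator (a b : Heis φ c) :
    ⁅a, b⁆ = ⟨0, φ a.v * c b.v - φ b.v * c a.v⟩ := by
  show a * b * a⁻¹ * b⁻¹ = _
  ext <;> simp only [Heis.mul_v, Heis.mul_t, Heis.inv_v, Heis.inv_t, map_neg, map_add]
  case v => abel
  case t => ring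

lemma Heis.pow_of_phi_eq_zero (a : Heis φ c) (h : φ a.v = 0) (k : ℕ) :
    a ^ k = ⟨k • a.v, k • a.t⟩ := by
  induction k with
  | zero => ext <;> simp
  | succ n ih =>
    rw [pow_succ, ih]
    ext <;> simp [succ_nsmul, h] <;> ring

lemma Heis.prod_central (L : List R) :
    (L.map fun t => (⟨0, t⟩ : Heis φ c)).prod = ⟨0, L.sum⟩ := by
  induction L with
  | nil => rfl
  | cons x L ih => ext <;> simp [ih]

end Heis



/-- `K_m(H)` for a subgroup `H` of a (free) group `F`, viewed as a subgroup of `F`.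
Here `m = 0` encodes `m = ∞`. It is the subgroup generated by all commutators of
elements of `H` together with all `m`-th powers of elements of `H`; for free `H` this is
exactly the kernel of the map `H → (ℤ/mℤ)^{rank H}` sending a basis to the standard
generators (and `K_0(H) = [H,H]`). -/
def Kset {F : Type*} [Group F] (m : ℕ) (H : Subgroup F) : Subgroup F :=
  Subgroup.closure
    ({x | ∃ a ∈ H, ∃ b ∈ H, x = a * b * a⁻¹ * b⁻¹} ∪ {x | ∃ u ∈ H, x = u ^ m})

/-- The rank of a subgroup `H`: the minimal cardinality of a finite generating set
(`⊤` if `H` is not finitely generated). For subgroups of free groups this is the rank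
of `H` as a free group. -/
noncomputable def grk {F : Type*} [Group F] (H : Subgroup F) : ℕ∞ :=
  sInf ((fun S : Finset F => (S.card : ℕ∞)) '' {S | Subgroup.closure (S : Set F) = H})

/-- `minrk r m w = min { rank H : H ≤ F_r, w ∈ K_m(H) }` (`⊤` if no such `H` exists).
In the paper's notation, `χ_m(w) = 1 - minrk r m w`. Here `m = 0` encodes `m = ∞`. -/
noncomputable def minrk (r m : ℕ) (w : FreeGroup (Fin r)) : ℕ∞ :=
  sInf (grk '' {H : Subgroup (FreeGroup (Fin r)) | w ∈ Kset m H})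

private def wg (g : ℕ) : FreeGroup (Fin (2 * g)) :=
  (List.ofFn fun i : Fin g =>
    ⁅FreeGroup.of (⟨2 * i.1, by omega⟩ : Fin (2 * g)),
      FreeGroup.of (⟨2 * i.1 + 1, by omega⟩ : Fin (2 * g))⁆).prod

/-- The main lower bound: any finite generating set of a subgroup `H` with
`wg g ∈ Kset m H` has at least `2*g` elements. -/
lemma lower_bound (g m : ℕ) (hm : m = 0 ∨ 2 ≤ m) (H : Subgroup (FreeGroup (Fin (2 * g))))
    (hw : wg g ∈ Kset m H) (S : Finset (FreeGroup (Fin (2 * g))))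
    (hS : Subgroup.closure (S : Set (FreeGroup (Fin (2 * g)))) = H) :
    2 * g ≤ S.card := by
  by_contra hlt
  push_neg at hlt
  have hm1 : m ≠ 1 := by omega
  obtain ⟨p, hp_def⟩ : ∃ p, p = m.minFac := ⟨_, rfl⟩
  have hp : p.Prime := hp_def ▸ Nat.minFac_prime hm1
  haveI : Fact p.Prime := ⟨hp⟩
  have hpm : (m : ZMod p) = 0 :=
    (ZMod.natCast_eq_zero_iff m p).2 (hp_def ▸ Nat.minFac_dvd m)
  -- the abelianization mod p
  obtain ⟨α, hα_def⟩ : ∃ α : FreeGroup (Fin (2 * g)) →* Multiplicative (Fin (2 * g) → ZMod p),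
      α = FreeGroup.lift fun j => Multiplicative.ofAdd (Pi.single j 1) := ⟨_, rfl⟩
  obtain ⟨V', hV'_def⟩ : ∃ V' : Submodule (ZMod p) (Fin (2 * g) → ZMod p),
      V' = Submodule.span (ZMod p) ((S.image fun s => (α s).toAdd : Finset _) : Set _) :=
    ⟨_, rfl⟩
  have hV'top : V' ≠ ⊤ := by
    intro htop
    have h1 : Module.finrank (ZMod p) V' ≤ (S.image fun s => (α s).toAdd).card := by
      rw [hV'_def]; exact finrank_span_finset_le_card _
    have h2 : (S.image fun s => (α s).toAdd).card ≤ S.card := Finset.card_image_le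
    have h3 : Module.finrank (ZMod p) (Fin (2 * g) → ZMod p) = 2 * g := by
      simp [Module.finrank_pi]
    rw [htop, finrank_top, h3] at h1
    omega
  obtain ⟨φ, hφne, hφbot⟩ :=
    Submodule.exists_dual_map_eq_bot_of_lt_top (lt_top_iff_ne_top.2 hV'top) inferInstance
  have hφV' : ∀ x ∈ V', φ x = 0 := by
    intro x hx
    have : φ x ∈ V'.map φ := Submodule.mem_map_of_mem hx
    rw [hφbot] at this
    simpa using this
  -- find a coordinate where φ is nonzero
  have hj : ∃ j : Fin (2 * g), φ (Pi.single j 1) ≠ 0 := by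
    by_contra hcon
    push_neg at hcon
    apply hφne
    apply LinearMap.ext
    intro x
    rw [LinearMap.pi_apply_eq_sum_univ]
    simp only [LinearMap.zero_apply]
    refine Finset.sum_eq_zero fun j _ => ?_
    have : (fun k => if j = k then (1 : ZMod p) else 0) = Pi.single j 1 := by
      ext k; simp [Pi.single_apply, eq_comm]
    rw [this, hcon j, smul_zero]
  obtain ⟨j0, hj0⟩ := hj
  -- the partner coordinate
  have hj0lt := j0.isLt
  obtain ⟨i0, hi0, hcase⟩ : ∃ i0 : ℕ, i0 < g ∧ (j0.1 = 2 * i0 ∨ j0.1 = 2 * i0 + 1) :=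
    ⟨j0.1 / 2, by omega, by omega⟩
  obtain ⟨k, hk⟩ : ∃ k : Fin (2 * g),
      (j0.1 = 2 * i0 → k.1 = 2 * i0 + 1) ∧ (j0.1 = 2 * i0 + 1 → k.1 = 2 * i0) := by
    rcases hcase with hc | hc
    · exact ⟨⟨2 * i0 + 1, by omega⟩, fun _ => rfl, fun h => by omega⟩
    · exact ⟨⟨2 * i0, by omega⟩, fun h => by omega, fun _ => rfl⟩
  obtain ⟨c, hc_def⟩ : ∃ c : (Fin (2 * g) → ZMod p) →ₗ[ZMod p] ZMod p,
      c = LinearMap.proj k := ⟨_, rfl⟩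
  -- the Heisenberg representation
  obtain ⟨ψ, hψ_def⟩ : ∃ ψ : FreeGroup (Fin (2 * g)) →* Heis φ c,
      ψ = FreeGroup.lift fun j => (⟨Pi.single j 1, 0⟩ : Heis φ c) := ⟨_, rfl⟩
  have hψv : ∀ x, (ψ x).v = (α x).toAdd := by
    intro x
    induction x using FreeGroup.induction_on with
    | C1 => simp
    | of j =>
      simp [hψ_def, hα_def, FreeGroup.lift_apply_of]
    | inv_of j ih => simp only [map_inv, Heis.inv_v, toAdd_inv, ih]
    | mul x y ihx ihy => simp only [map_mul, Heis.mul_v, toAdd_mul, ihx, ihy]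
  have hHv : ∀ h ∈ H, φ ((ψ h).v) = 0 := by
    obtain ⟨ρ, hρ_def⟩ : ∃ ρ : FreeGroup (Fin (2 * g)) →* Multiplicative (ZMod p),
        ρ = (AddMonoidHom.toMultiplicative φ.toAddMonoidHom).comp α := ⟨_, rfl⟩
    have hker : H ≤ ρ.ker := by
      rw [← hS, Subgroup.closure_le]
      intro s hs
      have hmem : (α s).toAdd ∈ V' := by
        rw [hV'_def]
        apply Submodule.subset_span
        simp only [Finset.coe_image]
        exact Set.mem_image_of_mem _ hs
      have h0 : φ ((α s).toAdd) = 0 := hφV' _ hmem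
      simp only [SetLike.mem_coe, MonoidHom.mem_ker, hρ_def, MonoidHom.comp_apply]
      simp [AddMonoidHom.toMultiplicative, h0]
    intro h hh
    have hmem := hker hh
    rw [MonoidHom.mem_ker] at hmem
    have h2 : φ ((α h).toAdd) = 0 := by
      have := congrArg Multiplicative.toAdd hmem
      simpa [hρ_def, AddMonoidHom.toMultiplicative] using this
    rw [hψv]; exact h2
  -- Kset m H is killed by ψ
  have hKker : Kset m H ≤ ψ.ker := by
    rw [Kset, Subgroup.closure_le]
    rintro x (⟨a, ha, b, hb, rfl⟩ | ⟨u, hu, rfl⟩)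
    · have hc : ψ (a * b * a⁻¹ * b⁻¹) = ⁅ψ a, ψ b⁆ := by
        simp [commutatorElement_def]
      simp only [SetLike.mem_coe, MonoidHom.mem_ker, hc, Heis.commutator,
        hHv a ha, hHv b hb]
      ext <;> simp
    · simp only [SetLike.mem_coe, MonoidHom.mem_ker, map_pow]
      rw [Heis.pow_of_phi_eq_zero _ (hHv u hu)]
      have hz : ∀ {M : Type} [AddCommGroup M] [Module (ZMod p) M] (x : M), m • x = 0 := by
        intro M _ _ x
        rw [← Nat.cast_smul_eq_nsmul (ZMod p), hpm, zero_smul]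
      ext <;> simp [hz]
  have hψw : ψ (wg g) = 1 := hKker hw
  -- but ψ (wg g) has nonzero t component
  obtain ⟨β, hβ_def⟩ : ∃ β : Fin g → ZMod p, β = fun i =>
      φ (Pi.single (⟨2 * i.1, by omega⟩ : Fin (2 * g)) 1) *
        c (Pi.single (⟨2 * i.1 + 1, by omega⟩ : Fin (2 * g)) 1) -
      φ (Pi.single (⟨2 * i.1 + 1, by omega⟩ : Fin (2 * g)) 1) *
        c (Pi.single (⟨2 * i.1, by omega⟩ : Fin (2 * g)) 1) := ⟨_, rfl⟩
  have hβ : ∀ i : Fin g, β i =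
      φ (Pi.single (⟨2 * i.1, by omega⟩ : Fin (2 * g)) 1) *
        c (Pi.single (⟨2 * i.1 + 1, by omega⟩ : Fin (2 * g)) 1) -
      φ (Pi.single (⟨2 * i.1 + 1, by omega⟩ : Fin (2 * g)) 1) *
        c (Pi.single (⟨2 * i.1, by omega⟩ : Fin (2 * g)) 1) := by
    intro i; rw [hβ_def]
  have hcomp : ψ (wg g) = ⟨0, ∑ i : Fin g, β i⟩ := by
    rw [wg, map_list_prod, List.map_ofFn]
    have heach : ∀ i : Fin g, (ψ ∘ fun i : Fin g =>
        ⁅FreeGroup.of (⟨2 * i.1, by omega⟩ : Fin (2 * g)),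
          FreeGroup.of (⟨2 * i.1 + 1, by omega⟩ : Fin (2 * g))⁆) i
        = (⟨0, β i⟩ : Heis φ c) := by
      intro i
      simp only [Function.comp_apply, map_commutatorElement, hψ_def, FreeGroup.lift_apply_of]
      rw [Heis.commutator, hβ i]
    have hlist : (List.ofFn (ψ ∘ fun i : Fin g =>
        ⁅FreeGroup.of (⟨2 * i.1, by omega⟩ : Fin (2 * g)),
          FreeGroup.of (⟨2 * i.1 + 1, by omega⟩ : Fin (2 * g))⁆))
        = List.map (fun t => (⟨0, t⟩ : Heis φ c)) (List.ofFn β) := by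
      rw [List.map_ofFn]
      congr 1
      funext i
      exact heach i
    rw [hlist, Heis.prod_central, List.sum_ofFn]
  have hsum : (∑ i : Fin g, β i) = 0 := by
    rw [hcomp] at hψw
    have := congrArg Heis.t hψw
    simpa using this
  -- evaluate `c` on basis vectors
  have hone : c (Pi.single k 1) = (1 : ZMod p) := by simp [hc_def]
  have hzero : ∀ j : Fin (2 * g), j ≠ k → c (Pi.single j 1) = 0 := by
    intro j hne
    have h0 : (Pi.single j 1 : Fin (2 * g) → ZMod p) k = 0 := Pi.single_eq_of_ne' hne 1
    simpa [hc_def] using h0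
  apply hj0
  rcases hcase with hcase | hcase
  · -- j0 = 2 i0, k = 2 i0 + 1
    have hkv : k.1 = 2 * i0 + 1 := hk.1 hcase
    have hmain : (∑ i : Fin g, β i) = φ (Pi.single j0 1) := by
      rw [Finset.sum_eq_single (⟨i0, hi0⟩ : Fin g)]
      · rw [hβ]
        have e1 : c (Pi.single (⟨2 * (⟨i0, hi0⟩ : Fin g).1 + 1, by omega⟩ : Fin (2 * g)) 1)
            = 1 := by
          rw [show (⟨2 * (⟨i0, hi0⟩ : Fin g).1 + 1, by omega⟩ : Fin (2 * g)) = k from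
            Fin.ext (by show 2 * i0 + 1 = k.1; omega)]
          exact hone
        have e2 : c (Pi.single (⟨2 * (⟨i0, hi0⟩ : Fin g).1, by omega⟩ : Fin (2 * g)) 1)
            = 0 := hzero _ (Fin.ne_of_val_ne (by show 2 * i0 ≠ k.1; omega))
        rw [e1, e2]
        rw [show (⟨2 * (⟨i0, hi0⟩ : Fin g).1, by omega⟩ : Fin (2 * g)) = j0 from
          Fin.ext (by show 2 * i0 = j0.1; omega)]
        ring
      · intro i _ hne
        have hne' : i.1 ≠ i0 := fun h => hne (Fin.ext h)
        rw [hβ]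
        have e1 : c (Pi.single (⟨2 * i.1 + 1, by omega⟩ : Fin (2 * g)) 1)
            = 0 := hzero _ (Fin.ne_of_val_ne (by show 2 * i.1 + 1 ≠ k.1; omega))
        have e2 : c (Pi.single (⟨2 * i.1, by omega⟩ : Fin (2 * g)) 1)
            = 0 := hzero _ (Fin.ne_of_val_ne (by show 2 * i.1 ≠ k.1; omega))
        rw [e1, e2]
        ring
      · intro h; exact absurd (Finset.mem_univ _) h
    rw [← hmain, hsum]
  · -- j0 = 2 i0 + 1, k = 2 i0
    have hkv : k.1 = 2 * i0 := hk.2 hcase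
    have hmain : (∑ i : Fin g, β i) = - φ (Pi.single j0 1) := by
      rw [Finset.sum_eq_single (⟨i0, hi0⟩ : Fin g)]
      · rw [hβ]
        have e1 : c (Pi.single (⟨2 * (⟨i0, hi0⟩ : Fin g).1 + 1, by omega⟩ : Fin (2 * g)) 1)
            = 0 := hzero _ (Fin.ne_of_val_ne (by show 2 * i0 + 1 ≠ k.1; omega))
        have e2 : c (Pi.single (⟨2 * (⟨i0, hi0⟩ : Fin g).1, by omega⟩ : Fin (2 * g)) 1)
            = 1 := by
          rw [show (⟨2 * (⟨i0, hi0⟩ : Fin g).1, by omega⟩ : Fin (2 * g)) = k from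
            Fin.ext (by show 2 * i0 = k.1; omega)]
          exact hone
        rw [e1, e2]
        rw [show (⟨2 * (⟨i0, hi0⟩ : Fin g).1 + 1, by omega⟩ : Fin (2 * g)) = j0 from
          Fin.ext (by show 2 * i0 + 1 = j0.1; omega)]
        ring
      · intro i _ hne
        have hne' : i.1 ≠ i0 := fun h => hne (Fin.ext h)
        rw [hβ]
        have e1 : c (Pi.single (⟨2 * i.1 + 1, by omega⟩ : Fin (2 * g)) 1)
            = 0 := hzero _ (Fin.ne_of_val_ne (by show 2 * i.1 + 1 ≠ k.1; omega))
        have e2 : c (Pi.single (⟨2 * i.1, by omega⟩ : Fin (2 * g)) 1)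
            = 0 := hzero _ (Fin.ne_of_val_ne (by show 2 * i.1 ≠ k.1; omega))
        rw [e1, e2]
        ring
      · intro h; exact absurd (Finset.mem_univ _) h
    have h0 : - φ (Pi.single j0 1) = 0 := by rw [← hmain, hsum]
    exact neg_eq_zero.mp h0

/-- For the genus-`g` orientable surface word `w = [x₁,y₁]⋯[x_g,y_g] ∈ F_{2g}` and every
`m ∈ ℤ_{≥2} ∪ {∞}` (`m = 0` encoding `∞`), the minimal rank of a subgroup `H ≤ F_{2g}`
with `w ∈ K_m(H)` is exactly `2g`, i.e. `χ_m(w) = 1 - 2g`. -/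
theorem stmt13 (g m : ℕ) (hm : m = 0 ∨ 2 ≤ m) :
    minrk (2 * g) m
      ((List.ofFn fun i : Fin g =>
        ⁅FreeGroup.of (⟨2 * i.1, by have := i.isLt; omega⟩ : Fin (2 * g)),
          FreeGroup.of (⟨2 * i.1 + 1, by have := i.isLt; omega⟩ : Fin (2 * g))⁆).prod) =
      ((2 * g : ℕ) : ℕ∞) := by
  have hwg : (List.ofFn fun i : Fin g =>
        ⁅FreeGroup.of (⟨2 * i.1, by have := i.isLt; omega⟩ : Fin (2 * g)),
          FreeGroup.of (⟨2 * i.1 + 1, by have := i.isLt; omega⟩ : Fin (2 * g))⁆).prod = wg g := rfl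
  rw [hwg]
  apply le_antisymm
  · -- upper bound: take H = ⊤
    have hwtop : wg g ∈ Kset m (⊤ : Subgroup (FreeGroup (Fin (2 * g)))) := by
      rw [wg]
      apply list_prod_mem
      intro x hx
      rw [List.mem_ofFn] at hx
      obtain ⟨i, rfl⟩ := hx
      apply Subgroup.subset_closure
      left
      exact ⟨_, trivial, _, trivial, commutatorElement_def _ _⟩
    have h1 : minrk (2 * g) m (wg g) ≤ grk (⊤ : Subgroup (FreeGroup (Fin (2 * g)))) :=
      sInf_le ⟨⊤, hwtop, rfl⟩
    have h2 : grk (⊤ : Subgroup (FreeGroup (Fin (2 * g)))) ≤ ((2 * g : ℕ) : ℕ∞) := by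
      have hmem : ((Finset.univ : Finset (Fin (2 * g))).image FreeGroup.of) ∈
          {S : Finset (FreeGroup (Fin (2 * g))) |
            Subgroup.closure (S : Set (FreeGroup (Fin (2 * g)))) = ⊤} := by
        simp only [Set.mem_setOf_eq, Finset.coe_image, Finset.coe_univ, Set.image_univ]
        exact FreeGroup.closure_range_of _
      calc grk (⊤ : Subgroup (FreeGroup (Fin (2 * g))))
          ≤ (((Finset.univ : Finset (Fin (2 * g))).image FreeGroup.of).card : ℕ∞) :=
            sInf_le ⟨_, hmem, rfl⟩
        _ ≤ ((2 * g : ℕ) : ℕ∞) := by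
            rw [Nat.cast_le]
            exact le_trans Finset.card_image_le (by simp)
    exact le_trans h1 h2
  · -- lower bound
    apply le_sInf
    rintro x ⟨H, hwH, rfl⟩
    apply le_sInf
    rintro y ⟨S, hclos, rfl⟩
    rw [Nat.cast_le]
    exact lower_bound g m hm H hwH S hclos
end

section
/- Let A₁, A₂ be independent uniformly random elements of the signed symmetric group C₂ ≀ S_N (N×N matrices with one nonzero entry ±1 per row and column). Then E[tr(A₁²A₂²)] = 1/N for every N ≥ 1. -/
lemma sign_orth {N : ℕ} (a b : Fin N) :
    ∑ ε : Fin N → ℤˣ, ((ε a : ℤ) : ℂ) * ((ε b : ℤ) : ℂ) = if a = b then (2:ℂ)^N else 0 := by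
  by_cases hab : a = b
  · subst hab
    rw [if_pos rfl]
    have : ∀ ε : Fin N → ℤˣ, ((ε a : ℤ) : ℂ) * ((ε a : ℤ) : ℂ) = 1 := by
      intro ε; rcases Int.units_eq_one_or (ε a) with h | h <;> rw [h] <;> norm_num
    rw [Finset.sum_congr rfl (fun ε _ => this ε), Finset.sum_const]
    simp [Fintype.card_fun, show Fintype.card ℤˣ = 2 from by decide]
  · rw [if_neg hab]
    set f : (Fin N → ℤˣ) → ℂ := fun ε => ((ε a : ℤ) : ℂ) * ((ε b : ℤ) : ℂ) with hf
    have hinv : Function.Involutive (fun ε : Fin N → ℤˣ => Function.update ε a (-(ε a))) := by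
      intro ε; funext j
      by_cases hj : j = a
      · subst hj; simp
      · simp [Function.update_of_ne hj]
    have h1 : ∑ ε : Fin N → ℤˣ, f ε = ∑ ε : Fin N → ℤˣ, f (Function.update ε a (-(ε a))) :=
      (Fintype.sum_equiv hinv.toPerm _ _ (fun ε => rfl)).symm
    have h2 : ∀ ε : Fin N → ℤˣ, f (Function.update ε a (-(ε a))) = - f ε := by
      intro ε
      simp [hf, Function.update_self, Function.update_of_ne (Ne.symm hab)]
    rw [Finset.sum_congr rfl (fun ε _ => h2 ε), Finset.sum_neg_distrib] at h1
    linear_combination (1/2 : ℂ) * h1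

lemma fix_count {N : ℕ} (i : Fin N) :
    Fintype.card {π : Equiv.Perm (Fin N) // π i = i} = (N-1).factorial := by
  have e1 := Equiv.Perm.subtypeEquivSubtypePerm (p := fun j : Fin N => j ≠ i)
  have e2 : {f : Equiv.Perm (Fin N) // ∀ a, ¬ a ≠ i → f a = a} ≃ {π : Equiv.Perm (Fin N) // π i = i} :=
    Equiv.subtypeEquivRight (fun f => by
      constructor
      · intro h; exact h i (by simp)
      · intro h a ha; rw [not_not] at ha; subst ha; exact h)
  rw [← Fintype.card_congr (e1.trans e2), Fintype.card_perm]
  simp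

/-- For independent uniformly random signed permutation matrices
`A₁, A₂ ∈ C₂ ≀ S_N` (one nonzero entry `±1` in each row and column),
`E[tr(A₁²A₂²)] = 1/N` for every `N ≥ 1`. An element is modelled by a pair
`(π, ε)` of a permutation and signs; the matrix `M π ε` has `(i,j)` entry `ε j`
if `i = π j` and `0` otherwise. -/
theorem stmt15 (N : ℕ) (hN : 1 ≤ N)
    (M : Equiv.Perm (Fin N) → (Fin N → ℤˣ) → Matrix (Fin N) (Fin N) ℂ)
    (hM : ∀ π ε i j, M π ε i j = if i = π j then ((ε j : ℤ) : ℂ) else 0) :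
    (1 / (Nat.card (Equiv.Perm (Fin N) × (Fin N → ℤˣ)) : ℂ) ^ 2) *
      ∑ p₁ : Equiv.Perm (Fin N) × (Fin N → ℤˣ),
        ∑ p₂ : Equiv.Perm (Fin N) × (Fin N → ℤˣ),
          Matrix.trace ((M p₁.1 p₁.2) ^ 2 * (M p₂.1 p₂.2) ^ 2) = 1 / (N : ℂ) := by
  classical
  -- entries of the square
  have hsq : ∀ π ε i j, ((M π ε)^2) i j
      = if i = π (π j) then ((ε (π j) : ℤ):ℂ) * ((ε j : ℤ):ℂ) else 0 := by
    intro π ε i j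
    rw [sq, Matrix.mul_apply]
    simp only [hM, mul_ite, mul_zero]
    rw [Finset.sum_ite_eq' Finset.univ (π j)]
    simp [ite_mul, zero_mul]
  -- trace formula
  have htr : ∀ p₁ p₂ : Equiv.Perm (Fin N) × (Fin N → ℤˣ),
      Matrix.trace ((M p₁.1 p₁.2) ^ 2 * (M p₂.1 p₂.2) ^ 2)
      = ∑ i : Fin N, ∑ j : Fin N,
          (if i = p₁.1 (p₁.1 j) then ((p₁.2 (p₁.1 j) : ℤ):ℂ) * ((p₁.2 j : ℤ):ℂ) else 0) *
          (if j = p₂.1 (p₂.1 i) then ((p₂.2 (p₂.1 i) : ℤ):ℂ) * ((p₂.2 i : ℤ):ℂ) else 0) := by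
    intro p₁ p₂
    rw [Matrix.trace]
    refine Finset.sum_congr rfl fun i _ => ?_
    rw [Matrix.diag_apply, Matrix.mul_apply]
    exact Finset.sum_congr rfl fun j _ => by rw [hsq, hsq]
  -- sum over signs
  have key : ∀ (π : Equiv.Perm (Fin N)) (i j : Fin N),
      ∑ ε : Fin N → ℤˣ, (if i = π (π j) then ((ε (π j) : ℤ):ℂ) * ((ε j : ℤ):ℂ) else 0)
      = if i = π (π j) ∧ π j = j then (2:ℂ)^N else 0 := by
    intro π i j
    by_cases h : i = π (π j)
    · simp only [if_pos h]
      rw [sign_orth (π j) j]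
      by_cases h2 : π j = j
      · rw [if_pos h2, if_pos ⟨h, h2⟩]
      · rw [if_neg h2, if_neg (by tauto)]
    · simp [h]
  -- counting permutations fixing i
  have count : ∀ i : Fin N,
      ∑ π : Equiv.Perm (Fin N), (if i = π (π i) ∧ π i = i then (2:ℂ)^N else 0)
      = ((N-1).factorial : ℂ) * 2^N := by
    intro i
    have hsimp : ∀ π : Equiv.Perm (Fin N),
        (if i = π (π i) ∧ π i = i then (2:ℂ)^N else 0) = if π i = i then (2:ℂ)^N else 0 := by
      intro π
      by_cases h : π i = i
      · rw [if_pos h, if_pos ⟨by rw [h, h], h⟩]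
      · rw [if_neg (by tauto), if_neg h]
    rw [Finset.sum_congr rfl (fun π _ => hsimp π), Finset.sum_ite, Finset.sum_const,
      Finset.sum_const, smul_zero, add_zero, nsmul_eq_mul]
    congr 1
    rw [← Fintype.card_subtype, fix_count]
  -- collapse the p₂ sum
  have step1 : ∀ p₁ : Equiv.Perm (Fin N) × (Fin N → ℤˣ),
      ∑ p₂ : Equiv.Perm (Fin N) × (Fin N → ℤˣ),
          Matrix.trace ((M p₁.1 p₁.2) ^ 2 * (M p₂.1 p₂.2) ^ 2)
      = ∑ i : Fin N, ∑ j : Fin N,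
          (if i = p₁.1 (p₁.1 j) then ((p₁.2 (p₁.1 j) : ℤ):ℂ) * ((p₁.2 j : ℤ):ℂ) else 0) *
          (∑ π₂ : Equiv.Perm (Fin N), if j = π₂ (π₂ i) ∧ π₂ i = i then (2:ℂ)^N else 0) := by
    intro p₁
    rw [Finset.sum_congr rfl (fun p₂ _ => htr p₁ p₂), Finset.sum_comm]
    refine Finset.sum_congr rfl fun i _ => ?_
    rw [Finset.sum_comm]
    refine Finset.sum_congr rfl fun j _ => ?_
    rw [← Finset.mul_sum]
    congr 1
    rw [Fintype.sum_prod_type]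
    refine Finset.sum_congr rfl fun π₂ _ => ?_
    exact key π₂ j i
  -- collapse the p₁ sum
  have step2 :
      ∑ p₁ : Equiv.Perm (Fin N) × (Fin N → ℤˣ),
        ∑ p₂ : Equiv.Perm (Fin N) × (Fin N → ℤˣ),
          Matrix.trace ((M p₁.1 p₁.2) ^ 2 * (M p₂.1 p₂.2) ^ 2)
      = ∑ i : Fin N, ∑ j : Fin N,
          (∑ π₁ : Equiv.Perm (Fin N), if i = π₁ (π₁ j) ∧ π₁ j = j then (2:ℂ)^N else 0) *
          (∑ π₂ : Equiv.Perm (Fin N), if j = π₂ (π₂ i) ∧ π₂ i = i then (2:ℂ)^N else 0) := by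
    rw [Finset.sum_congr rfl (fun p₁ _ => step1 p₁), Finset.sum_comm]
    refine Finset.sum_congr rfl fun i _ => ?_
    rw [Finset.sum_comm]
    refine Finset.sum_congr rfl fun j _ => ?_
    rw [← Finset.sum_mul]
    congr 1
    rw [Fintype.sum_prod_type]
    refine Finset.sum_congr rfl fun π₁ _ => ?_
    exact key π₁ i j
  -- evaluate the double sum over i j
  have hzero : ∀ i j : Fin N, j ≠ i →
      (∑ π₂ : Equiv.Perm (Fin N), if j = π₂ (π₂ i) ∧ π₂ i = i then (2:ℂ)^N else 0) = 0 := by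
    intro i j hji
    refine Finset.sum_eq_zero fun π _ => ?_
    rw [if_neg]
    rintro ⟨h1, h2⟩
    exact hji (by rw [h1, h2, h2])
  have step3 :
      ∑ i : Fin N, ∑ j : Fin N,
          (∑ π₁ : Equiv.Perm (Fin N), if i = π₁ (π₁ j) ∧ π₁ j = j then (2:ℂ)^N else 0) *
          (∑ π₂ : Equiv.Perm (Fin N), if j = π₂ (π₂ i) ∧ π₂ i = i then (2:ℂ)^N else 0)
      = (N : ℂ) * (((N-1).factorial : ℂ) * 2^N)^2 := by
    have hi : ∀ i : Fin N,
        ∑ j : Fin N,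
          (∑ π₁ : Equiv.Perm (Fin N), if i = π₁ (π₁ j) ∧ π₁ j = j then (2:ℂ)^N else 0) *
          (∑ π₂ : Equiv.Perm (Fin N), if j = π₂ (π₂ i) ∧ π₂ i = i then (2:ℂ)^N else 0)
        = (((N-1).factorial : ℂ) * 2^N)^2 := by
      intro i
      rw [Finset.sum_eq_single i]
      · rw [count i]; ring
      · intro j _ hji
        rw [hzero i j hji, mul_zero]
      · intro h; exact absurd (Finset.mem_univ i) h
    rw [Finset.sum_congr rfl (fun i _ => hi i), Finset.sum_const, Finset.card_univ,
      Fintype.card_fin, nsmul_eq_mul]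
  rw [step2, step3]
  -- final arithmetic
  have hcard : (Nat.card (Equiv.Perm (Fin N) × (Fin N → ℤˣ)) : ℂ)
      = (N.factorial : ℂ) * 2^N := by
    rw [Nat.card_eq_fintype_card, Fintype.card_prod, Fintype.card_perm, Fintype.card_fun,
      Fintype.card_fin, show Fintype.card ℤˣ = 2 from by decide]
    push_cast
    ring
  rw [hcard]
  have hfac : (N.factorial : ℂ) = (N : ℂ) * ((N-1).factorial : ℂ) := by
    rw [← Nat.mul_factorial_pred (by omega : N ≠ 0)]
    push_cast
    ring
  rw [hfac]
  have hN0 : (N : ℂ) ≠ 0 := Nat.cast_ne_zero.mpr (by omega)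
  have hf0 : ((N-1).factorial : ℂ) ≠ 0 := Nat.cast_ne_zero.mpr (Nat.factorial_ne_zero _)
  have h20 : (2:ℂ)^N ≠ 0 := pow_ne_zero _ two_ne_zero
  field_simp
end

section
/- Let w ∈ F_r be a nontrivial word and m ∈ Z_{≥2}. If m > |w| (the word length of the reduced form of w), then for every subgroup H ≤ F_r: w ∈ K_m(H) if and only if w ∈ K_∞(H) = [H,H]. Consequently χ_m(w) = χ_∞(w) for all m > |w|. -/
open FreeGroup

namespace Stmt17Aux

variable {r : ℕ}

abbrev F (r : ℕ) := FreeGroup (Fin r)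

variable (H : Subgroup (F r))

open Classical in
/-- A representative of the right coset `Hg`, with `rep H g = 1` when `g ∈ H`. -/
noncomputable def rep (g : F r) : F r :=
  if g ∈ H then 1 else (Quotient.mk (QuotientGroup.rightRel H) g).out

lemma rep_spec (g : F r) : rep H g * g⁻¹ ∈ H := by
  unfold rep
  split_ifs with h
  · simpa using H.inv_mem h
  · have : Quotient.mk (QuotientGroup.rightRel H) ((Quotient.mk (QuotientGroup.rightRel H) g).out)
        = Quotient.mk (QuotientGroup.rightRel H) g := Quotient.out_eq _
    have h2 := Quotient.exact (s := QuotientGroup.rightRel H) this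
    exact QuotientGroup.rightRel_apply.mp ((QuotientGroup.rightRel H).symm h2)

lemma rep_eq_of_rel {g g' : F r} (h : g * g'⁻¹ ∈ H) : rep H g = rep H g' := by
  have hq : Quotient.mk (QuotientGroup.rightRel H) g = Quotient.mk (QuotientGroup.rightRel H) g' :=
    (Quotient.sound (s := QuotientGroup.rightRel H) (QuotientGroup.rightRel_apply.mpr h)).symm
  have hmem : g ∈ H ↔ g' ∈ H := by
    constructor
    · intro hg
      have := H.mul_mem (H.inv_mem h) hg
      simpa [mul_assoc] using this
    · intro hg'
      have := H.mul_mem h hg'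
      simpa [mul_assoc] using this
  unfold rep
  by_cases hg : g ∈ H
  · rw [if_pos hg, if_pos (hmem.mp hg)]
  · rw [if_neg hg, if_neg (fun h' => hg (hmem.mpr h')), hq]

lemma rep_mem_H {g : F r} (h : g ∈ H) : rep H g = 1 := by
  unfold rep; rw [if_pos h]

lemma rep_H_mul {h g : F r} (hh : h ∈ H) : rep H (h * g) = rep H g := by
  apply rep_eq_of_rel
  simpa [mul_assoc] using hh

lemma rep_rep_mul (g : F r) (x : F r) : rep H (rep H g * x) = rep H (g * x) := by
  have : rep H g * x = (rep H g * g⁻¹) * (g * x) := by group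
  rw [this, rep_H_mul H (rep_spec H g)]

/-- Schreier generator attached to an "edge" `(t, i)`. -/
noncomputable def S (e : F r × Fin r) : F r :=
  e.1 * FreeGroup.of e.2 * (rep H (e.1 * FreeGroup.of e.2))⁻¹

lemma S_mem (e : F r × Fin r) : S H e ∈ H := by
  have := rep_spec H (e.1 * FreeGroup.of e.2)
  have := H.inv_mem this
  simpa [S, mul_assoc] using this

/-- The list of (edge, orientation) pairs traversed by the path of the word `L`
starting at the coset of `g`. -/
noncomputable def edgeList : F r → List (Fin r × Bool) → List ((F r × Fin r) × Bool)
  | _, [] => []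
  | g, (i, true) :: l => ((rep H g, i), true) :: edgeList (g * FreeGroup.of i) l
  | g, (i, false) :: l =>
      ((rep H (g * (FreeGroup.of i)⁻¹), i), false) :: edgeList (g * (FreeGroup.of i)⁻¹) l

/-- Signed crossing count of the edge `e`. -/
def cnt (e : F r × Fin r) (L : List ((F r × Fin r) × Bool)) : ℤ :=
  (L.map fun p => if p.1 = e then (if p.2 then (1 : ℤ) else -1) else 0).sum

lemma cnt_nil (e : F r × Fin r) : cnt e ([] : List ((F r × Fin r) × Bool)) = 0 := rfl

lemma cnt_cons (e : F r × Fin r) (p) (L) :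
    cnt e (p :: L) = (if p.1 = e then (if p.2 then (1 : ℤ) else -1) else 0) + cnt e L := by
  simp [cnt]

lemma cnt_append (e : F r × Fin r) (L₁ L₂) :
    cnt e (L₁ ++ L₂) = cnt e L₁ + cnt e L₂ := by
  simp [cnt]

lemma edgeList_append (g : F r) (l₁ l₂ : List (Fin r × Bool)) :
    edgeList H g (l₁ ++ l₂) = edgeList H g l₁ ++ edgeList H (g * FreeGroup.mk l₁) l₂ := by
  induction l₁ generalizing g with
  | nil => simp [edgeList, ← FreeGroup.one_eq_mk]
  | cons p l₁ ih =>
    obtain ⟨i, b⟩ := p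
    have hcons : FreeGroup.mk ((i, b) :: l₁) = FreeGroup.mk [(i, b)] * FreeGroup.mk l₁ := by
      rw [FreeGroup.mul_mk]; rfl
    cases b
    · have h2 : FreeGroup.mk [(i, false)] = (FreeGroup.of i)⁻¹ := by
        rw [FreeGroup.of, FreeGroup.inv_mk]; rfl
      simp only [List.cons_append, edgeList, hcons, h2, List.append_eq]
      rw [ih, mul_assoc]
    · have h2 : FreeGroup.mk [(i, true)] = FreeGroup.of i := rfl
      simp only [List.cons_append, edgeList, hcons, h2, List.append_eq]
      rw [ih, mul_assoc]

lemma edgeList_H_mul {h : F r} (hh : h ∈ H) (g : F r) (L : List (Fin r × Bool)) :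
    edgeList H (h * g) L = edgeList H g L := by
  induction L generalizing g with
  | nil => rfl
  | cons p L ih =>
    obtain ⟨i, b⟩ := p
    cases b <;> simp only [edgeList, mul_assoc, rep_H_mul H hh, ih]

lemma edgeList_length (g : F r) (L : List (Fin r × Bool)) :
    (edgeList H g L).length = L.length := by
  induction L generalizing g with
  | nil => rfl
  | cons p L ih => obtain ⟨i, b⟩ := p; cases b <;> simp [edgeList, ih]

lemma cnt_step (e : F r × Fin r) (g : F r) (x : Fin r) (b : Bool) (l : List (Fin r × Bool)) :
    cnt e (edgeList H g ((x, b) :: (x, !b) :: l)) = cnt e (edgeList H g l) := by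
  cases b
  · have h1 : g * (FreeGroup.of x)⁻¹ * FreeGroup.of x = g := by group
    simp only [Bool.not_false, edgeList, h1, cnt_cons]
    split_ifs <;> first | contradiction | ring
  · have h1 : g * FreeGroup.of x * (FreeGroup.of x)⁻¹ = g := by group
    simp only [Bool.not_true, edgeList, h1, cnt_cons]
    split_ifs <;> first | contradiction | ring


/-- The crossing-count function `ψ_e : F_r → ℤ`. -/
noncomputable def psi (e : F r × Fin r) : F r → ℤ :=
  Quot.lift (fun L => cnt e (edgeList H 1 L)) (by
    intro L₁ L₂ h
    cases h with
    | @not l₁ l₂ x b =>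
      rw [edgeList_append, edgeList_append, cnt_append, cnt_append]
      congr 1
      exact cnt_step H e _ x b l₂)

lemma psi_mk (e : F r × Fin r) (L : List (Fin r × Bool)) :
    psi H e (FreeGroup.mk L) = cnt e (edgeList H 1 L) := rfl

lemma psi_eq (e : F r × Fin r) (u : F r) :
    psi H e u = cnt e (edgeList H 1 u.toWord) := by
  conv_lhs => rw [← FreeGroup.mk_toWord (x := u)]
  rfl

lemma psi_one (e : F r × Fin r) : psi H e 1 = 0 := by
  rw [FreeGroup.one_eq_mk, psi_mk]; rfl

lemma psi_add {u : F r} (hu : u ∈ H) (v : F r) (e : F r × Fin r) :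
    psi H e (u * v) = psi H e u + psi H e v := by
  conv_lhs => rw [← FreeGroup.mk_toWord (x := u), ← FreeGroup.mk_toWord (x := v),
    FreeGroup.mul_mk, psi_mk, edgeList_append, cnt_append]
  rw [psi_eq, psi_eq]
  congr 1
  have h1 : (1 : F r) * FreeGroup.mk u.toWord = u * 1 := by
    rw [FreeGroup.mk_toWord]; group
  rw [h1, edgeList_H_mul H hu]

lemma psi_inv {u : F r} (hu : u ∈ H) (e : F r × Fin r) :
    psi H e u⁻¹ = -psi H e u := by
  have := psi_add H hu u⁻¹ e
  rw [mul_inv_cancel, psi_one] at this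
  linarith

lemma psi_pow {u : F r} (hu : u ∈ H) (n : ℕ) (e : F r × Fin r) :
    psi H e (u ^ n) = n * psi H e u := by
  induction n with
  | zero => simpa using psi_one H e
  | succ n ih =>
    rw [pow_succ', psi_add H hu, ih]
    push_cast
    ring

lemma Kset_le (m : ℕ) : Kset m H ≤ H := by
  apply Subgroup.closure_le H |>.mpr
  rintro x (⟨a, ha, b, hb, rfl⟩ | ⟨u, hu, rfl⟩)
  · exact H.mul_mem (H.mul_mem (H.mul_mem ha hb) (H.inv_mem ha)) (H.inv_mem hb)
  · exact H.pow_mem hu _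

lemma psi_dvd_of_mem_Kset (m : ℕ) {x : F r} (hx : x ∈ Kset m H) (e : F r × Fin r) :
    (m : ℤ) ∣ psi H e x := by
  induction hx using Subgroup.closure_induction with
  | mem y hy =>
    rcases hy with ⟨a, ha, b, hb, rfl⟩ | ⟨u, hu, rfl⟩
    · have h1 : psi H e (a * (b * (a⁻¹ * b⁻¹))) = 0 := by
        rw [psi_add H ha, psi_add H hb, psi_add H (H.inv_mem ha), psi_inv H ha,
          psi_inv H hb]
        ring
      have h2 : a * b * a⁻¹ * b⁻¹ = a * (b * (a⁻¹ * b⁻¹)) := by group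
      rw [h2, h1]
      exact dvd_zero _
    · rw [psi_pow H hu]
      exact Dvd.intro _ rfl
  | one => rw [psi_one]; exact dvd_zero _
  | mul y z hy hz ihy ihz =>
    rw [psi_add H (Kset_le H m hy)]
    exact dvd_add ihy ihz
  | inv y hy ihy =>
    rw [psi_inv H (Kset_le H m hy)]
    exact ihy.neg_right

lemma psi_abs_le (e : F r × Fin r) (u : F r) : |psi H e u| ≤ (u.toWord.length : ℤ) := by
  rw [psi_eq]
  rw [← edgeList_length H 1 u.toWord]
  generalize edgeList H 1 u.toWord = L
  induction L with
  | nil => simp [cnt_nil]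
  | cons p L ih =>
    rw [cnt_cons]
    refine le_trans (abs_add_le _ _) ?_
    have h1 : |if p.1 = e then (if p.2 then (1 : ℤ) else -1) else 0| ≤ 1 := by
      split_ifs <;> simp
    simp only [List.length_cons]
    push_cast
    linarith

/-- The Schreier telescoping identity. -/
lemma schreier (L : List (Fin r × Bool)) (g : F r) :
    rep H g * FreeGroup.mk L * (rep H (g * FreeGroup.mk L))⁻¹ =
      ((edgeList H g L).map fun p => cond p.2 (S H p.1) (S H p.1)⁻¹).prod := by
  induction L generalizing g with
  | nil =>
    rw [← FreeGroup.one_eq_mk]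
    simp [edgeList]
  | cons p L ih =>
    obtain ⟨i, b⟩ := p
    cases b
    · have hmk : FreeGroup.mk ((i, false) :: L) = (FreeGroup.of i)⁻¹ * FreeGroup.mk L := by
        have h2 : (FreeGroup.of i)⁻¹ = FreeGroup.mk [(i, false)] := by
          show (FreeGroup.mk [(i, true)])⁻¹ = _
          rw [FreeGroup.inv_mk]
          rfl
        have h3 : ((i, false) :: L) = [(i, false)] ++ L := rfl
        rw [h3, ← FreeGroup.mul_mk, ← h2]
      simp only [edgeList, List.map_cons, List.prod_cons, hmk]
      rw [← ih (g * (FreeGroup.of i)⁻¹)]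
      have hrep : rep H (rep H (g * (FreeGroup.of i)⁻¹) * FreeGroup.of i) = rep H g := by
        rw [rep_rep_mul]
        congr 1
        group
      show _ = (S H (rep H (g * (FreeGroup.of i)⁻¹), i))⁻¹ * _
      rw [S]
      simp only
      rw [hrep]
      have : g * ((FreeGroup.of i)⁻¹ * FreeGroup.mk L) = g * (FreeGroup.of i)⁻¹ * FreeGroup.mk L := by
        group
      rw [this]
      group
    · have hmk : FreeGroup.mk ((i, true) :: L) = FreeGroup.of i * FreeGroup.mk L := by
        have : ((i, true) :: L) = [(i, true)] ++ L := rfl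
        rw [this, ← FreeGroup.mul_mk]; rfl
      simp only [edgeList, List.map_cons, List.prod_cons, hmk]
      rw [← ih (g * FreeGroup.of i)]
      have hrep : rep H (rep H g * FreeGroup.of i) = rep H (g * FreeGroup.of i) := by
        rw [rep_rep_mul]
      show _ = S H (rep H g, i) * _
      rw [S]
      simp only
      rw [hrep]
      have : g * (FreeGroup.of i * FreeGroup.mk L) = g * FreeGroup.of i * FreeGroup.mk L := by
        group
      rw [this]
      group

lemma schreier_w {w : F r} (hw : w ∈ H) :
    w = ((edgeList H 1 w.toWord).map fun p => cond p.2 (S H p.1) (S H p.1)⁻¹).prod := by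
  have := schreier H w.toWord 1
  rw [FreeGroup.mk_toWord] at this
  rw [rep_mem_H H H.one_mem, one_mul, rep_mem_H H hw, inv_one, mul_one] at this
  exact this

/-- Abelian counting: a signed product with vanishing signed counts is trivial. -/
lemma abelian_count {A : Type*} [CommGroup A] (α : (F r × Fin r) → A)
    (L : List ((F r × Fin r) × Bool)) (s : Finset (F r × Fin r))
    (hs : ∀ p ∈ L, p.1 ∈ s) :
    (L.map fun p => cond p.2 (α p.1) (α p.1)⁻¹).prod = ∏ e ∈ s, α e ^ (cnt e L) := by
  induction L with
  | nil =>
    simp [cnt_nil]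
  | cons p L ih =>
    have hps : p.1 ∈ s := hs p List.mem_cons_self
    have hs' : ∀ q ∈ L, q.1 ∈ s := fun q hq => hs q (List.mem_cons_of_mem _ hq)
    rw [List.map_cons, List.prod_cons, ih hs']
    have hcnt : ∀ e, cnt e (p :: L) =
        (if p.1 = e then (if p.2 then (1 : ℤ) else -1) else 0) + cnt e L :=
      fun e => cnt_cons e p L
    simp only [hcnt]
    rw [Finset.prod_congr rfl (fun e _ => zpow_add (α e) _ _), Finset.prod_mul_distrib]
    congr 1
    have : ∀ e ∈ s, α e ^ (if p.1 = e then (if p.2 then (1 : ℤ) else -1) else 0)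
        = (if p.1 = e then α e ^ (if p.2 then (1 : ℤ) else -1) else 1) := by
      intro e _
      split_ifs <;> simp
    rw [Finset.prod_congr rfl this, Finset.prod_ite_eq, if_pos hps]
    cases hb : p.2 <;> simp

open scoped commutatorElement in
/-- The key direction: membership in `K_m(H)` with short length forces membership
in the commutator subgroup. -/
lemma mem_Kset_zero {m : ℕ} {w : F r} (hwm : w ∈ Kset m H)
    (hlen : (FreeGroup.toWord w).length < m) : w ∈ Kset 0 H := by
  have hwH : w ∈ H := Kset_le H m hwm
  -- all crossing counts vanish
  have hzero : ∀ e, cnt e (edgeList H 1 w.toWord) = 0 := by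
    intro e
    have h1 : (m : ℤ) ∣ psi H e w := psi_dvd_of_mem_Kset H m hwm e
    have h2 : |psi H e w| ≤ (w.toWord.length : ℤ) := psi_abs_le H e w
    have h3 : |psi H e w| < (m : ℤ) := lt_of_le_of_lt h2 (by exact_mod_cast hlen)
    have h4 : psi H e w = 0 := by
      by_contra hne
      have := Int.le_of_dvd (abs_pos.mpr hne) ((dvd_abs _ _).mpr h1)
      omega
    rw [psi_eq] at h4
    exact h4
  -- the Schreier product expression, in `H`
  set L := edgeList H 1 w.toWord with hL
  let hlist : List H := L.map fun p => cond p.2 (⟨S H p.1, S_mem H p.1⟩ : H)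
    (⟨S H p.1, S_mem H p.1⟩ : H)⁻¹
  have hsub : ∀ p : (F r × Fin r) × Bool,
      (H.subtype) (cond p.2 (⟨S H p.1, S_mem H p.1⟩ : H) (⟨S H p.1, S_mem H p.1⟩ : H)⁻¹)
        = cond p.2 (S H p.1) (S H p.1)⁻¹ := by
    intro p; cases p.2 <;> rfl
  have hprod : H.subtype hlist.prod = w := by
    rw [map_list_prod]
    rw [schreier_w H hwH]
    congr 1
    simp only [hlist, List.map_map]
    apply List.map_congr_left
    intro p _
    exact hsub p
  -- image in the abelianization is trivial
  have habel : Abelianization.of hlist.prod = 1 := by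
    rw [map_list_prod]
    have : (hlist.map (Abelianization.of : H →* Abelianization H))
        = L.map fun p => cond p.2 (Abelianization.of (⟨S H p.1, S_mem H p.1⟩ : H))
            (Abelianization.of (⟨S H p.1, S_mem H p.1⟩ : H))⁻¹ := by
      simp only [hlist, List.map_map]
      apply List.map_congr_left
      intro p _
      cases hb : p.2 <;> simp [hb]
    rw [this, abelian_count (fun e => Abelianization.of (⟨S H e, S_mem H e⟩ : H)) L
      (L.map Prod.fst).toFinset (by intro p hp; simp only [List.mem_toFinset, List.mem_map]
                                    exact ⟨p, hp, rfl⟩)]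
    apply Finset.prod_eq_one
    intro e _
    rw [hzero e]
    rfl
  -- hence lies in the commutator subgroup of `H`
  have hcomm : hlist.prod ∈ commutator H := by
    rw [← QuotientGroup.eq_one_iff (hlist.prod)]
    exact habel
  -- and so `w` lies in `Kset 0 H`
  rw [commutator_def, Subgroup.commutator_def] at hcomm
  have himg : w ∈ Subgroup.map H.subtype
      (Subgroup.closure {g : H | ∃ g₁ ∈ (⊤ : Subgroup H), ∃ g₂ ∈ (⊤ : Subgroup H), ⁅g₁, g₂⁆ = g}) :=
    ⟨hlist.prod, hcomm, hprod⟩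
  rw [MonoidHom.map_closure] at himg
  refine Subgroup.closure_mono ?_ himg
  rintro x ⟨g, ⟨g₁, -, g₂, -, rfl⟩, rfl⟩
  left
  exact ⟨g₁, g₁.2, g₂, g₂.2, rfl⟩

lemma Kset_zero_le (m : ℕ) : Kset 0 H ≤ Kset m H := by
  apply Subgroup.closure_le _ |>.mpr
  rintro x (⟨a, ha, b, hb, rfl⟩ | ⟨u, hu, rfl⟩)
  · exact Subgroup.subset_closure (Or.inl ⟨a, ha, b, hb, rfl⟩)
  · simpa using (Kset m H).one_mem

end Stmt17Aux


/-- If `w ≠ 1` and `m > |w|` (the reduced word length of `w`), then for every subgroup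
`H ≤ F_r`, `w ∈ K_m(H)` iff `w ∈ K_∞(H) = [H,H]`; consequently `χ_m(w) = χ_∞(w)`
(equivalently `minrk r m w = minrk r 0 w`, with `m = 0` encoding `∞`). -/
theorem stmt17 (r m : ℕ) (w : FreeGroup (Fin r)) (hw : w ≠ 1)
    (hm : (FreeGroup.toWord w).length < m) :
    (∀ H : Subgroup (FreeGroup (Fin r)), w ∈ Kset m H ↔ w ∈ Kset 0 H) ∧
    minrk r m w = minrk r 0 w := by
  have hiff : ∀ H : Subgroup (FreeGroup (Fin r)), w ∈ Kset m H ↔ w ∈ Kset 0 H := by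
    intro H
    exact ⟨fun h => Stmt17Aux.mem_Kset_zero H h hm, fun h => Stmt17Aux.Kset_zero_le H m h⟩
  refine ⟨hiff, ?_⟩
  have hset : {H : Subgroup (FreeGroup (Fin r)) | w ∈ Kset m H}
      = {H : Subgroup (FreeGroup (Fin r)) | w ∈ Kset 0 H} := by
    ext H
    exact hiff H
  unfold minrk
  rw [hset]
end

section
/- Suppose w ∈ F_r with sql(w) = g < ∞ and χ₂(w) = 1 - g, and suppose the subgroup J = ⟨u₁,...,u_g⟩ generated by witnesses to w = u₁²⋯u_g² is a free factor of F_r. Then r ≥ g, the elements u₁,...,u_g form part of a basis of F_r, and there is an automorphism θ of F_r with θ(w) = x₁²⋯x_g². -/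
open scoped commutatorElement

/-- The commutator length of `w`: the minimal `g` such that `w` is a product of `g`
commutators (`⊤` if `w` is not in the commutator subgroup). -/
noncomputable def clw {F : Type*} [Group F] (w : F) : ℕ∞ :=
  sInf {n : ℕ∞ | ∃ g : ℕ, (g : ℕ∞) = n ∧ ∃ u v : Fin g → F,
    w = (List.ofFn fun i => ⁅u i, v i⁆).prod}

/-- The square length of `w`: the minimal `g` such that `w = u₁²⋯u_g²`
(`⊤` if `w` is not a product of squares). -/
noncomputable def sqlw {F : Type*} [Group F] (w : F) : ℕ∞ :=
  sInf {n : ℕ∞ | ∃ g : ℕ, (g : ℕ∞) = n ∧ ∃ u : Fin g → F,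
    w = (List.ofFn fun i => (u i) ^ 2).prod}

/-- `S` is a free basis of the subgroup `H ≤ F`: the canonical map `FreeGroup S → F`
induced by inclusion is injective (so `S` satisfies no nontrivial relation) and its
range is `H` (so `S` generates `H`). -/
def IsFreeBasis {F : Type*} [Group F] (S : Set F) (H : Subgroup F) : Prop :=
  Function.Injective (FreeGroup.lift (Subtype.val : S → F)) ∧
    MonoidHom.range (FreeGroup.lift (Subtype.val : S → F)) = H

/-- `A` is a free factor of `J` (written `A ≤* J`): some free basis of `A` extends to a
free basis of `J`. -/
def IsFreeFactor {F : Type*} [Group F] (A J : Subgroup F) : Prop :=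
  ∃ S T : Set F, IsFreeBasis S A ∧ IsFreeBasis (S ∪ T) J

open Function in
lemma exists_perm_extend {α : Type*} [Fintype α] (s : Set α)
    (f : α → α) (hf : Set.InjOn f s) :
    ∃ e : Equiv.Perm α, ∀ x ∈ s, e x = f x := by
  classical
  let e₁ : ↥s ≃ ↥(f '' s) := Equiv.Set.imageOfInjOn f s hf
  have hcard : Fintype.card ↥sᶜ = Fintype.card ↥(f '' s)ᶜ := by
    rw [Fintype.card_compl_set, Fintype.card_compl_set, Fintype.card_congr e₁]
  let e₂ : ↥sᶜ ≃ ↥(f '' s)ᶜ := Fintype.equivOfCardEq hcard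
  refine ⟨((Equiv.Set.sumCompl s).symm.trans ((e₁.sumCongr e₂).trans
    (Equiv.Set.sumCompl (f '' s)))), ?_⟩
  intro x hx
  have h1 : (Equiv.Set.sumCompl s).symm x = Sum.inl ⟨x, hx⟩ :=
    Equiv.Set.sumCompl_symm_apply_of_mem hx
  simp [h1, e₁, Equiv.Set.imageOfInjOn]

lemma exists_perm_hom_ne_one {α : Type*} [DecidableEq α] (k : FreeGroup α) (hk : k ≠ 1) :
    ∃ (N : ℕ) (ψ : FreeGroup α →* Equiv.Perm (Fin N)), ψ k ≠ 1 := by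
  classical
  set L := k.toWord with hL
  set n := L.length with hn
  have hn1 : n ≠ 0 := by
    simp only [hn, hL]
    intro h
    exact hk (FreeGroup.toWord_eq_nil_iff.mp (List.length_eq_zero_iff.mp h))
  set R := L.reverse with hR
  have hRlen : R.length = n := L.length_reverse
  have hLred : ∀ (q : ℕ) (x : α) (b : Bool),
      L[q]? = some (x, b) → L[q+1]? = some (x, !b) → False := by
    intro q x b h1 h2
    obtain ⟨hq, h1'⟩ := List.getElem?_eq_some_iff.mp h1
    obtain ⟨hq2, h2'⟩ := List.getElem?_eq_some_iff.mp h2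
    have hdec : L = L.take q ++ (x, b) :: (x, !b) :: L.drop (q+2) := by
      conv_lhs => rw [← List.take_append_drop q L]
      rw [List.drop_eq_getElem_cons hq, List.drop_eq_getElem_cons hq2, h1', h2']
    have : FreeGroup.reduce L = L.take q ++ (x, b) :: (x, !b) :: L.drop (q+2) :=
      (FreeGroup.reduce_toWord k).trans hdec
    exact FreeGroup.reduce.not this
  have hRred : ∀ (p : ℕ) (x : α) (b : Bool),
      R[p]? = some (x, b) → R[p+1]? = some (x, !b) → False := by
    intro p x b h1 h2
    have hp2 : p + 1 < n := hRlen ▸ (List.getElem?_eq_some_iff.mp h2).1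
    refine hLred (n - 2 - p) x (!b) ?_ ?_
    · rw [show n - 2 - p = L.length - 1 - (p+1) by omega,
        ← List.getElem?_reverse (show p + 1 < L.length by omega)]
      exact h2
    · rw [show n - 2 - p + 1 = L.length - 1 - p by omega,
        ← List.getElem?_reverse (show p < L.length by omega), Bool.not_not]
      exact h1
  set dom : α → Set (Fin (n+1)) := fun x =>
    {a | R[(a:ℕ)]? = some (x, true) ∨ ((a:ℕ) ≠ 0 ∧ R[(a:ℕ)-1]? = some (x, false))} with hdom
  set f₀ : α → Fin (n+1) → Fin (n+1) := fun x a =>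
    if h : R[(a:ℕ)]? = some (x, true) then
      ⟨(a:ℕ)+1, by
        have h' := (List.getElem?_eq_some_iff.mp h).1
        omega⟩
    else if h2 : (a:ℕ) ≠ 0 ∧ R[(a:ℕ)-1]? = some (x, false) then
      ⟨(a:ℕ)-1, by omega⟩
    else a with hf₀
  have hinj : ∀ x, Set.InjOn (f₀ x) (dom x) := by
    intro x a ha b hb hab
    have key : ∀ c : Fin (n+1), c ∈ dom x →
        (R[(c:ℕ)]? = some (x, true) ∧ (f₀ x c : ℕ) = (c:ℕ)+1) ∨
        (¬ R[(c:ℕ)]? = some (x, true) ∧ (c:ℕ) ≠ 0 ∧ R[(c:ℕ)-1]? = some (x, false)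
          ∧ (f₀ x c : ℕ) = (c:ℕ)-1) := by
      intro c hc
      by_cases h : R[(c:ℕ)]? = some (x, true)
      · left; refine ⟨h, ?_⟩; simp only [hf₀, dif_pos h]
      · right
        rcases hc with hc | hc
        · exact absurd hc h
        · refine ⟨h, hc.1, hc.2, ?_⟩
          simp only [hf₀, dif_neg h, dif_pos hc]
    have hab' : (f₀ x a : ℕ) = (f₀ x b : ℕ) := by rw [hab]
    rcases key a ha with ⟨h1, e1⟩ | ⟨h1, h1', h1'', e1⟩ <;>
      rcases key b hb with ⟨h2, e2⟩ | ⟨h2, h2', h2'', e2⟩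
    · exact Fin.ext (by omega)
    · exfalso
      refine hRred (a:ℕ) x true h1 ?_
      rw [show (a:ℕ) + 1 = (b:ℕ) - 1 by omega]
      exact h2''
    · exfalso
      refine hRred (b:ℕ) x true h2 ?_
      rw [show (b:ℕ) + 1 = (a:ℕ) - 1 by omega]
      exact h1''
    · exact Fin.ext (by omega)
  choose E hE using fun x => exists_perm_extend (dom x) (f₀ x) (hinj x)
  have P1 : ∀ (p : ℕ) (hp : p < n) (x : α), R[p]? = some (x, true) →
      E x ⟨p, by omega⟩ = ⟨p+1, by omega⟩ := by
    intro p hp x hpx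
    have hmem : (⟨p, by omega⟩ : Fin (n+1)) ∈ dom x := Or.inl hpx
    rw [hE x _ hmem]
    simp only [hf₀]
    rw [dif_pos hpx]
  have P2 : ∀ (p : ℕ) (hp : p < n) (x : α), R[p]? = some (x, false) →
      E x ⟨p+1, by omega⟩ = ⟨p, by omega⟩ := by
    intro p hp x hpx
    have hmem : (⟨p+1, by omega⟩ : Fin (n+1)) ∈ dom x := by
      right
      refine ⟨by simp, by simpa using hpx⟩
    rw [hE x _ hmem]
    have hnot : ¬ R[p+1]? = some (x, true) := fun hcon =>
      hRred p x false hpx (by simpa using hcon)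
    simp only [hf₀]
    rw [dif_neg (by simpa using hnot), dif_pos (by exact ⟨by simp, by simpa using hpx⟩)]
    exact Fin.ext (by simp)
  set ψ := FreeGroup.lift E with hψ
  refine ⟨n+1, ψ, ?_⟩
  have key : ∀ m : ℕ, (hm : m ≤ n) →
      ((List.map (fun t => bif t.2 then E t.1 else (E t.1)⁻¹) (L.drop (n - m))).prod)
        ⟨0, n.succ_pos⟩ = ⟨m, Nat.lt_succ_of_le hm⟩ := by
    intro m
    induction m with
    | zero =>
      intro _
      rw [Nat.sub_zero, show L.drop n = [] from hn ▸ List.drop_length (l := L)]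
      simp
    | succ m ih =>
      intro hm
      have hj : n - (m+1) < L.length := by omega
      rw [List.drop_eq_getElem_cons hj, show n - (m+1) + 1 = n - m by omega,
        List.map_cons, List.prod_cons]
      simp only [Equiv.Perm.mul_apply]
      rw [ih (by omega)]
      rcases ht : L[n - (m+1)]'hj with ⟨x, b⟩
      have hRm : R[m]? = some (x, b) := by
        rw [hR, List.getElem?_reverse (show m < L.length by omega),
          show L.length - 1 - m = n - (m+1) by omega, List.getElem?_eq_getElem hj, ht]
      cases b with
      | true =>
        simpa using P1 m (by omega) x hRm
      | false =>
        rw [Bool.cond_false, Equiv.Perm.inv_eq_iff_eq]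
        exact (P2 m (by omega) x hRm).symm
  intro hcon
  have h0 : ψ k ⟨0, by omega⟩ = ⟨n, by omega⟩ := by
    have hk' : ψ k = ((List.map (fun t => bif t.2 then E t.1 else (E t.1)⁻¹) L).prod) := by
      conv_lhs => rw [← FreeGroup.mk_toWord (x := k)]
      exact FreeGroup.lift_mk
    rw [hk']
    have := key n le_rfl
    rwa [Nat.sub_self, List.drop_zero] at this
  rw [hcon] at h0
  simp only [Equiv.Perm.one_apply, Fin.mk.injEq] at h0
  exact hn1 h0.symm

lemma freeGroup_hopf {n : ℕ} (φ : FreeGroup (Fin n) →* FreeGroup (Fin n))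
    (hs : Function.Surjective φ) : Function.Injective φ := by
  suffices h : ∀ k, φ k = 1 → k = 1 by
    intro a b hab
    have h1 : φ (a * b⁻¹) = 1 := by rw [map_mul, map_inv, hab, mul_inv_cancel]
    have := h _ h1
    rwa [mul_inv_eq_one] at this
  intro k hk1
  by_contra hk
  obtain ⟨N, ψ, hψ⟩ := exists_perm_hom_ne_one k hk
  have hfin : Finite (FreeGroup (Fin n) →* Equiv.Perm (Fin N)) :=
    Finite.of_equiv _ FreeGroup.lift
  have hcomp : Function.Injective
      (fun χ : FreeGroup (Fin n) →* Equiv.Perm (Fin N) => χ.comp φ) := by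
    intro χ₁ χ₂ h
    exact (MonoidHom.cancel_right hs).mp h
  obtain ⟨χ, hχ⟩ := Finite.injective_iff_surjective.mp hcomp ψ
  have : ψ k = 1 := by
    rw [← hχ]
    simp only [MonoidHom.comp_apply, hk1, map_one]
  exact hψ this

open Function in
lemma card_le_of_gen {G : Type*} [Group G] {β : Type*} (e : FreeGroup β ≃* G)
    {m : ℕ} (v : Fin m → G) (hv : Subgroup.closure (Set.range v) = ⊤) :
    ∃ _ : Fintype β, Fintype.card β ≤ m := by
  classical
  -- the images of v generate FreeGroup β
  have hgen : Subgroup.closure (Set.range (fun i => e.symm (v i))) = ⊤ := by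
    have := congrArg (Subgroup.map e.symm.toMonoidHom) hv
    rwa [MonoidHom.map_closure, ← Set.range_comp,
      ← MonoidHom.range_eq_map, MulEquiv.coe_toMonoidHom,
      MonoidHom.range_eq_top.mpr e.symm.surjective] at this
  have hinj : Injective (fun (f : β → (Multiplicative (ZMod 2))) (i : Fin m) => (FreeGroup.lift f) (e.symm (v i))) := by
    intro f f' hff
    have : (FreeGroup.lift f) = (FreeGroup.lift f') := by
      apply MonoidHom.eq_of_eqOn_dense hgen
      rintro x ⟨i, rfl⟩
      exact congrFun hff i
    exact FreeGroup.lift.injective this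
  have hfinM : Finite (β → (Multiplicative (ZMod 2))) := Finite.of_injective _ hinj
  have hfinβ : Finite β := by
    have hembinj : Function.Injective
        (fun (b : β) (c : β) => if c = b then (Multiplicative.ofAdd (1 : ZMod 2)) else 1) := by
      intro b b' hbb
      by_contra hne
      have := congrFun hbb b
      simp only [if_true] at this
      rw [if_neg hne] at this
      exact absurd this (by decide)
    exact Finite.of_injective _ hembinj
  have : Fintype β := Fintype.ofFinite β
  refine ⟨this, ?_⟩
  have hcard : Fintype.card (β → (Multiplicative (ZMod 2))) ≤ Fintype.card (Fin m → (Multiplicative (ZMod 2))) :=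
    Fintype.card_le_of_injective _ hinj
  rw [Fintype.card_fun, Fintype.card_fun] at hcard
  have hM2 : Fintype.card (Multiplicative (ZMod 2)) = 2 := rfl
  rw [hM2, Fintype.card_fin] at hcard
  exact (Nat.pow_le_pow_iff_right (by norm_num)).mp hcard

/-- Suppose `w ∈ F_r` has square length `g`, witnessed by `w = u₁²⋯u_g²`, that
`χ₂(w) = 1 - g` (i.e. `minrk r 2 w = g`), and that `J = ⟨u₁,…,u_g⟩` is a free factor of
`F_r`. Then `r ≥ g`, the elements `u₁,…,u_g` are part of a basis of `F_r`, and some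
automorphism of `F_r` carries `w` to the non-orientable surface word `x₁²⋯x_g²`. -/
theorem stmt19 (r g : ℕ) (w : FreeGroup (Fin r)) (u : Fin g → FreeGroup (Fin r))
    (hw : w = (List.ofFn fun i => (u i) ^ 2).prod)
    (hsql : sqlw w = (g : ℕ∞))
    (hchi : minrk r 2 w = (g : ℕ∞))
    (hJ : IsFreeFactor (Subgroup.closure (Set.range u))
      (⊤ : Subgroup (FreeGroup (Fin r)))) :
    ∃ h : g ≤ r,
      (∃ S : Set (FreeGroup (Fin r)),
          IsFreeBasis S (⊤ : Subgroup (FreeGroup (Fin r))) ∧ Set.range u ⊆ S) ∧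
      ∃ θ : FreeGroup (Fin r) ≃* FreeGroup (Fin r),
        θ w = (List.ofFn fun i : Fin g =>
          (FreeGroup.of (⟨i.1, by have := i.isLt; omega⟩ : Fin r)) ^ 2).prod := by
  classical
  obtain ⟨S, T, ⟨hSinj, hSrange⟩, hBinj, hBrange⟩ := hJ
  set J : Subgroup (FreeGroup (Fin r)) := Subgroup.closure (Set.range u) with hJdef
  set B : Set (FreeGroup (Fin r)) := S ∪ T with hBdef
  have hui : ∀ i, u i ∈ J := fun i => Subgroup.subset_closure ⟨i, rfl⟩
  -- Step 1 : w ∈ Kset 2 J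
  have hwK : w ∈ Kset 2 J := by
    rw [hw]
    apply Subgroup.list_prod_mem
    intro x hx
    rw [List.mem_ofFn] at hx
    obtain ⟨i, rfl⟩ := hx
    exact Subgroup.subset_closure (Or.inr ⟨u i, hui i, rfl⟩)
  -- Step 2 : g ≤ grk J
  have h1 : (g : ℕ∞) ≤ grk J := by
    rw [← hchi]
    exact sInf_le ⟨J, hwK, rfl⟩
  -- Step 3 : closure S = J, closure B = ⊤
  have hSgen : Subgroup.closure S = J := by
    have h := FreeGroup.range_lift_eq_closure (f := (Subtype.val : S → FreeGroup (Fin r)))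
    rw [Subtype.range_coe] at h
    rw [← h, hSrange]
  have hBgen : Subgroup.closure B = ⊤ := by
    have h := FreeGroup.range_lift_eq_closure (f := (Subtype.val : B → FreeGroup (Fin r)))
    rw [Subtype.range_coe] at h
    rw [← h, hBrange]
  -- Step 4 : S finite with card ≤ g
  have huran : ∀ i, u i ∈ MonoidHom.range (FreeGroup.lift (Subtype.val : S → FreeGroup (Fin r))) := by
    intro i; rw [hSrange]; exact hui i
  choose ut hut using huran
  have htop : Subgroup.closure (Set.range ut) = ⊤ := by
    apply Subgroup.map_injective hSinj
    rw [MonoidHom.map_closure, ← Set.range_comp]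
    have hcomp : (⇑(FreeGroup.lift (Subtype.val : S → FreeGroup (Fin r)))) ∘ ut = u := funext hut
    rw [hcomp, ← MonoidHom.range_eq_map, hSrange]
  obtain ⟨instS, hcardS⟩ := card_le_of_gen (MulEquiv.refl (FreeGroup ↥S)) ut htop
  -- Step 5 : card S = g
  have h2 : grk J ≤ (Fintype.card ↥S : ℕ∞) := by
    apply sInf_le
    refine ⟨S.toFinset, ?_, ?_⟩
    · show Subgroup.closure _ = J
      rw [Set.coe_toFinset, hSgen]
    · simp [Set.toFinset_card]
  have hSg : Fintype.card ↥S = g := le_antisymm hcardS (by exact_mod_cast h1.trans h2)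
  -- Step 6 : B is a basis of FreeGroup (Fin r)
  have hBsurj : Function.Surjective (FreeGroup.lift (Subtype.val : B → FreeGroup (Fin r))) :=
    MonoidHom.range_eq_top.mp hBrange
  let eB : FreeGroup ↥B ≃* FreeGroup (Fin r) :=
    MulEquiv.ofBijective (FreeGroup.lift (Subtype.val : B → FreeGroup (Fin r))) ⟨hBinj, hBsurj⟩
  -- Step 7 : card B = r
  obtain ⟨instB, hcardB⟩ := card_le_of_gen eB (fun i : Fin r => FreeGroup.of i)
    (FreeGroup.closure_range_of (Fin r))
  have hrB : r ≤ Fintype.card ↥B := by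
    have hvB : Subgroup.closure (Set.range (fun i : Fin (Fintype.card ↥B) =>
        ((Fintype.equivFin ↥B).symm i : FreeGroup (Fin r)))) = ⊤ := by
      have hre : Set.range (fun i : Fin (Fintype.card ↥B) =>
          ((Fintype.equivFin ↥B).symm i : FreeGroup (Fin r))) = B := by
        rw [show (fun i : Fin (Fintype.card ↥B) =>
            ((Fintype.equivFin ↥B).symm i : FreeGroup (Fin r)))
          = (Subtype.val : ↥B → FreeGroup (Fin r)) ∘ (Fintype.equivFin ↥B).symm from rfl,
          (Fintype.equivFin ↥B).symm.surjective.range_comp, Subtype.range_coe]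
      rw [hre, hBgen]
    obtain ⟨instFr, h⟩ := card_le_of_gen (MulEquiv.refl (FreeGroup (Fin r)))
      (fun i : Fin (Fintype.card ↥B) => ((Fintype.equivFin ↥B).symm i : FreeGroup (Fin r))) hvB
    rwa [Subsingleton.elim instFr (Fin.fintype r), Fintype.card_fin] at h
  have hBr : Fintype.card ↥B = r := le_antisymm hcardB hrB
  -- Step 8 : g ≤ r and card (B \ S) = r - g
  have hsub : S ⊆ B := Set.subset_union_left
  set D : Set (FreeGroup (Fin r)) := B \ S with hDdef
  have hDfin : Fintype ↥D := by
    have : Finite ↥B := Finite.of_fintype _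
    have : D.Finite := (Set.toFinite B).subset Set.diff_subset
    exact this.fintype
  have hcards : Fintype.card ↥S + Fintype.card ↥D = Fintype.card ↥B := by
    rw [← Fintype.card_sum]
    exact Fintype.card_congr (Equiv.Set.sumDiffSubset hsub)
  have hgr : g ≤ r := by omega
  have hDcard : Fintype.card ↥D = r - g := by omega
  -- Step 9 : index equivalence
  let eD : ↥D ≃ Fin (r - g) := Fintype.equivFinOfCardEq hDcard
  let eSum : Fin g ⊕ ↥D ≃ Fin r :=
    ((Equiv.refl (Fin g)).sumCongr eD).trans (finSumFinEquiv.trans (finCongr (by omega)))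
  have heSum : ∀ i : Fin g, eSum (Sum.inl i) = (⟨i.1, by omega⟩ : Fin r) := by
    intro i
    apply Fin.ext
    simp [eSum, finCongr]
  -- Step 10 : the homomorphism Λ
  set v : Fin r → FreeGroup (Fin r) := fun j => Sum.elim u (Subtype.val : ↥D → FreeGroup (Fin r)) (eSum.symm j) with hvdef
  set Λ : FreeGroup (Fin r) →* FreeGroup (Fin r) := FreeGroup.lift v with hΛdef
  have hvran : Set.range v = Set.range u ∪ D := by
    rw [hvdef]
    rw [show (fun j => Sum.elim u (Subtype.val : ↥D → FreeGroup (Fin r)) (eSum.symm j))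
      = (Sum.elim u (Subtype.val : ↥D → FreeGroup (Fin r))) ∘ eSum.symm from rfl,
      eSum.symm.surjective.range_comp, Set.Sum.elim_range, Subtype.range_coe]
  have hΛrange : Λ.range = ⊤ := by
    rw [hΛdef, FreeGroup.range_lift_eq_closure, hvran, eq_top_iff, ← hBgen]
    rw [Subgroup.closure_le]
    intro b hb
    by_cases hbS : b ∈ S
    · have hbJ : b ∈ J := hSgen ▸ Subgroup.subset_closure hbS
      exact Subgroup.closure_mono Set.subset_union_left hbJ
    · exact Subgroup.subset_closure (Or.inr ⟨hb, hbS⟩)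
  have hΛsurj : Function.Surjective Λ := MonoidHom.range_eq_top.mp hΛrange
  have hΛinj : Function.Injective Λ := freeGroup_hopf Λ hΛsurj
  have hΛof : ∀ i : Fin g, Λ (FreeGroup.of (⟨i.1, by omega⟩ : Fin r)) = u i := by
    intro i
    rw [hΛdef, FreeGroup.lift_apply_of, hvdef]
    have hkey : ∀ (j : Fin r), j = eSum (Sum.inl i) →
        Sum.elim u (Subtype.val : ↥D → FreeGroup (Fin r)) (eSum.symm j) = u i := by
      rintro j rfl
      rw [Equiv.symm_apply_apply]
      rfl
    exact hkey _ (heSum i).symm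
  -- Step 11 : the automorphism θ
  let eΛ : FreeGroup (Fin r) ≃* FreeGroup (Fin r) := MulEquiv.ofBijective Λ ⟨hΛinj, hΛsurj⟩
  have hΛw : Λ ((List.ofFn fun i : Fin g =>
      (FreeGroup.of (⟨i.1, by omega⟩ : Fin r)) ^ 2).prod) = w := by
    rw [map_list_prod, List.map_ofFn, hw]
    refine congrArg List.prod (congrArg List.ofFn (funext fun i => ?_))
    simp only [Function.comp_apply, map_pow]
    rw [hΛof]
  -- Step 12 : the basis
  have hvinj : Function.Injective v := by
    have : v = ⇑Λ ∘ FreeGroup.of := by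
      funext j
      rw [Function.comp_apply, hΛdef, FreeGroup.lift_apply_of]
    rw [this]
    exact hΛinj.comp FreeGroup.of_injective
  set S' : Set (FreeGroup (Fin r)) := Set.range u ∪ D with hS'def
  let q : Fin r ≃ ↥S' := (Equiv.ofInjective v hvinj).trans (Equiv.setCongr hvran)
  have hvq : ∀ s : ↥S', v (q.symm s) = s.val := by
    intro s
    show v ((Equiv.ofInjective v hvinj).symm ((Equiv.setCongr hvran).symm s)) = _
    rw [Equiv.apply_ofInjective_symm hvinj]
    rfl
  have hcomm : FreeGroup.lift (Subtype.val : ↥S' → FreeGroup (Fin r))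
      = Λ.comp (FreeGroup.freeGroupCongr q).symm.toMonoidHom := by
    apply FreeGroup.ext_hom
    intro s
    rw [FreeGroup.lift_apply_of, MonoidHom.comp_apply, MulEquiv.coe_toMonoidHom,
      FreeGroup.freeGroupCongr_symm, FreeGroup.freeGroupCongr_apply, FreeGroup.map.of,
      hΛdef, FreeGroup.lift_apply_of, hvq]
  refine ⟨hgr, ⟨S', ⟨?_, ?_⟩, ?_⟩, ⟨eΛ.symm, ?_⟩⟩
  · rw [hcomm, MonoidHom.coe_comp]
    exact hΛinj.comp (FreeGroup.freeGroupCongr q).symm.injective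
  · rw [hcomm, MonoidHom.range_eq_top, MonoidHom.coe_comp]
    exact hΛsurj.comp (FreeGroup.freeGroupCongr q).symm.surjective
  · exact Set.subset_union_left
  · rw [← hΛw]
    exact eΛ.symm_apply_apply _
end
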